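/- arXiv:1607.07831 — 4 statements merged into one kernel-verified Lean document; each statement's English description precedes it below -/
import Mathlib

section
/- (Jacobi triple product) For |q|<1 and z ≠ 0, θ_q(z) = (1/(q;q)_∞) · Σ_{n=−∞}^{∞} (−1)^n q^{n(n−1)/2} z^n, i.e. (z;q)_∞ (q/z;q)_∞ (q;q)_∞ = Σ_{n∈ℤ} (−1)^n q^{n(n−1)/2} z^n. -/
open Finset Filter Topology

noncomputable def qPochInf (q z : ℂ) : ℂ := ∏' k : ℕ, (1 - q ^ k * z)

noncomputable def qTheta (q z : ℂ) : ℂ := qPochInf q z * qPochInf q (q / z)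

noncomputable def Pq (q : ℂ) (m : ℕ) : ℂ := ∏ j ∈ Finset.range m, (1 - q ^ (j + 1))

noncomputable def Gq (q : ℂ) (m k : ℕ) : ℂ :=
  if k ≤ m then Pq q m / (Pq q k * Pq q (m - k)) else 0

lemma one_sub_ne_zero_of_norm_lt_one {u : ℂ} (h : ‖u‖ < 1) : (1 : ℂ) - u ≠ 0 := by
  intro h0
  have : (1 : ℂ) = u := by linear_combination h0
  rw [← this] at h
  simp at h

lemma norm_pow_succ_lt_one {q : ℂ} (hq : ‖q‖ < 1) (j : ℕ) : ‖q ^ (j + 1)‖ < 1 := by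
  rw [norm_pow]
  calc ‖q‖ ^ (j + 1) ≤ ‖q‖ ^ 1 := by
        apply pow_le_pow_of_le_one (norm_nonneg q) hq.le; omega
    _ < 1 := by simpa using hq

lemma Pq_ne_zero {q : ℂ} (hq : ‖q‖ < 1) (m : ℕ) : Pq q m ≠ 0 := by
  apply Finset.prod_ne_zero_iff.2
  intro j _
  exact one_sub_ne_zero_of_norm_lt_one (norm_pow_succ_lt_one hq j)

lemma Pq_succ (q : ℂ) (m : ℕ) : Pq q (m + 1) = Pq q m * (1 - q ^ (m + 1)) :=
  Finset.prod_range_succ _ m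

@[simp] lemma Pq_zero (q : ℂ) : Pq q 0 = 1 := rfl

lemma Gq_zero {q : ℂ} (hq : ‖q‖ < 1) (m : ℕ) : Gq q m 0 = 1 := by
  rw [Gq, if_pos (Nat.zero_le m), Pq_zero, Nat.sub_zero, one_mul, div_self (Pq_ne_zero hq m)]

@[simp] lemma Gq_self {q : ℂ} (hq : ‖q‖ < 1) (m : ℕ) : Gq q m m = 1 := by
  rw [Gq, if_pos le_rfl, Nat.sub_self, Pq_zero, mul_one, div_self (Pq_ne_zero hq m)]

lemma Gq_of_gt (q : ℂ) {m k : ℕ} (h : m < k) : Gq q m k = 0 := by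
  simp [Gq, Nat.not_le.2 h]

lemma Gq_pascal {q : ℂ} (hq : ‖q‖ < 1) (N i : ℕ) (hi : i ≤ N) :
    Gq q (N + 1) (i + 1) = Gq q N (i + 1) + q ^ (N - i) * Gq q N i := by
  rcases eq_or_lt_of_le hi with rfl | hlt
  · rw [Gq_of_gt q (Nat.lt_succ_self i), Gq_self hq, Gq_self hq, Nat.sub_self]
    simp
  · have hi1 : i + 1 ≤ N := hlt
    have h1 : Gq q (N + 1) (i + 1) = Pq q (N + 1) / (Pq q (i + 1) * Pq q (N - i)) := by
      rw [Gq, if_pos (by omega : i + 1 ≤ N + 1), show N + 1 - (i + 1) = N - i from by omega]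
    have h2 : Gq q N (i + 1) = Pq q N / (Pq q (i + 1) * Pq q (N - i - 1)) := by
      rw [Gq, if_pos hi1, show N - (i + 1) = N - i - 1 from by omega]
    have h3 : Gq q N i = Pq q N / (Pq q i * Pq q (N - i)) := by rw [Gq, if_pos hi]
    have e1 : Pq q (N + 1) = Pq q N * (1 - q ^ (N - i) * q ^ (i + 1)) := by
      rw [Pq_succ, ← pow_add, show N - i + (i + 1) = N + 1 from by omega]
    have e2 : Pq q (N - i) = Pq q (N - i - 1) * (1 - q ^ (N - i)) := by
      rw [show N - i = (N - i - 1) + 1 from by omega, Pq_succ,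
        show N - i - 1 + 1 = N - i from by omega]
    have e3 : Pq q (i + 1) = Pq q i * (1 - q ^ (i + 1)) := Pq_succ q i
    have hP1 := Pq_ne_zero hq N
    have hP2 := Pq_ne_zero hq i
    have hP3 := Pq_ne_zero hq (N - i - 1)
    have hf1 := one_sub_ne_zero_of_norm_lt_one (norm_pow_succ_lt_one hq i)
    have hf2 : (1 : ℂ) - q ^ (N - i) ≠ 0 :=
      one_sub_ne_zero_of_norm_lt_one (by
        rw [show N - i = (N - i - 1) + 1 from by omega]
        exact norm_pow_succ_lt_one hq _)
    rw [h1, h2, h3, e1, e2, e3]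
    generalize q ^ (N - i) = a at *
    generalize q ^ (i + 1) = b at *
    field_simp
    ring

lemma tri_succ (i : ℕ) : (i + 1) * i / 2 = i * (i - 1) / 2 + i := by
  rw [show (i+1) * i / 2 = (i+1) * ((i+1) - 1) / 2 from by simp, ← Nat.choose_two_right,
    ← Nat.choose_two_right, Nat.choose_succ_succ]
  simp [Nat.choose_one_right, add_comm]

lemma cauchy_binom {q : ℂ} (hq : ‖q‖ < 1) (t : ℂ) (N : ℕ) :
    ∏ k ∈ range N, (1 + t * q ^ k)
      = ∑ j ∈ range (N + 1), q ^ (j * (j - 1) / 2) * Gq q N j * t ^ j := by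
  induction N with
  | zero => simp [Gq_zero hq]
  | succ N ih =>
      rw [Finset.prod_range_succ, ih]
      rw [Finset.sum_range_succ' (fun j => q ^ (j * (j - 1) / 2) * Gq q (N + 1) j * t ^ j) (N + 1)]
      have h0 : q ^ (0 * (0 - 1) / 2) * Gq q (N + 1) 0 * t ^ 0 = 1 := by
        simp [Gq_zero hq]
      rw [h0]
      have hsplit : ∀ i ∈ range (N + 1),
          q ^ ((i + 1) * (i + 1 - 1) / 2) * Gq q (N + 1) (i + 1) * t ^ (i + 1)
            = q ^ ((i + 1) * i / 2) * Gq q N (i + 1) * t ^ (i + 1)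
              + (q ^ N * t) * (q ^ (i * (i - 1) / 2) * Gq q N i * t ^ i) := by
        intro i hi
        have hi' : i ≤ N := by simpa using Nat.lt_succ_iff.mp (Finset.mem_range.mp hi)
        rw [Nat.add_sub_cancel, Gq_pascal hq N i hi']
        have hexp : q ^ ((i + 1) * i / 2) * q ^ (N - i) = q ^ (i * (i - 1) / 2) * q ^ N := by
          rw [← pow_add, ← pow_add]
          congr 1
          have := tri_succ i
          omega
        calc q ^ ((i+1) * i / 2) * (Gq q N (i+1) + q ^ (N - i) * Gq q N i) * t ^ (i+1)
            = q ^ ((i+1) * i / 2) * Gq q N (i+1) * t ^ (i+1)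
              + (q ^ ((i+1) * i / 2) * q ^ (N - i)) * Gq q N i * t ^ (i + 1) := by ring
          _ = _ := by rw [hexp]; ring
      rw [Finset.sum_congr rfl hsplit, Finset.sum_add_distrib, ← Finset.mul_sum]
      have hback : (∑ i ∈ range (N + 1), q ^ ((i + 1) * i / 2) * Gq q N (i + 1) * t ^ (i + 1)) + 1
          = ∑ j ∈ range (N + 1), q ^ (j * (j - 1) / 2) * Gq q N j * t ^ j := by
        have := Finset.sum_range_succ' (fun j => q ^ (j * (j - 1) / 2) * Gq q N j * t ^ j) (N + 1)
        rw [Finset.sum_range_succ (fun j => q ^ (j * (j - 1) / 2) * Gq q N j * t ^ j) (N + 1),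
          Gq_of_gt q (Nat.lt_succ_self N)] at this
        simp only [mul_zero, zero_mul, add_zero, Nat.add_sub_cancel, pow_zero, Nat.zero_div,
          Gq_zero hq, mul_one, one_mul] at this
        linear_combination -this
      linear_combination (-1 : ℂ) * hback

lemma nat_tri_cast (j : ℕ) : ((j * (j - 1) / 2 : ℕ) : ℤ) * 2 = (j : ℤ) * ((j : ℤ) - 1) := by
  cases j with
  | zero => simp
  | succ m =>
      obtain ⟨c, hc⟩ := Nat.even_mul_succ_self m
      have h2 : (m + 1) * m = 2 * c := by rw [mul_comm, hc]; ring
      have hgoal : ((m + 1 : ℕ) : ℤ) * (((m + 1 : ℕ) : ℤ) - 1) = (((m + 1) * m : ℕ) : ℤ) := by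
        push_cast; ring
      rw [Nat.add_sub_cancel, hgoal]
      generalize hp : (m + 1) * m = p at h2 ⊢
      omega

lemma int_tri (n : ℤ) : n * (n - 1) / 2 * 2 = n * (n - 1) := by
  apply Int.ediv_mul_cancel
  have := Int.even_mul_succ_self (n - 1)
  simpa [mul_comm] using this.two_dvd

lemma key_term {q z : ℂ} (hq0 : q ≠ 0) (hz : z ≠ 0) (N j : ℕ) :
    q ^ (j * (j - 1) / 2) * (-(z * q⁻¹ ^ N)) ^ j
      = (-(z * q⁻¹ ^ N)) ^ N * q ^ (N * (N - 1) / 2)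
        * ((-1) ^ ((j : ℤ) - N) * q ^ (((j : ℤ) - N) * (((j : ℤ) - N) - 1) / 2)
            * z ^ ((j : ℤ) - N)) := by
  have hpow : ∀ k : ℕ, (-(z * q⁻¹ ^ N)) ^ k
      = (-1 : ℂ) ^ (k : ℤ) * z ^ (k : ℤ) * q ^ (-((N : ℤ) * k)) := by
    intro k
    rw [neg_eq_neg_one_mul, mul_pow, mul_pow, ← pow_mul, zpow_natCast, zpow_natCast]
    have hh : q ^ (-((N : ℤ) * k)) = q⁻¹ ^ (N * k) := by
      rw [zpow_neg, show ((N : ℤ) * k) = ((N * k : ℕ) : ℤ) from by push_cast; ring,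
        zpow_natCast, inv_pow]
    rw [hh]
    ring
  set n : ℤ := (j : ℤ) - N with hn
  rw [hpow j, hpow N]
  rw [show q ^ (j * (j - 1) / 2) = q ^ ((j * (j - 1) / 2 : ℕ) : ℤ) from (zpow_natCast q _).symm,
    show q ^ (N * (N - 1) / 2) = q ^ ((N * (N - 1) / 2 : ℕ) : ℤ) from (zpow_natCast q _).symm]
  have hm1 : (-1 : ℂ) ≠ 0 := by norm_num
  have hsign : (-1 : ℂ) ^ (j : ℤ) = (-1 : ℂ) ^ (N : ℤ) * (-1 : ℂ) ^ n := by
    rw [← zpow_add₀ hm1]; congr 1; omega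
  have hzz : z ^ (j : ℤ) = z ^ (N : ℤ) * z ^ n := by
    rw [← zpow_add₀ hz]; congr 1; omega
  have hqq : q ^ ((j * (j - 1) / 2 : ℕ) : ℤ) * q ^ (-((N : ℤ) * j))
      = q ^ (-((N : ℤ) * N)) * q ^ ((N * (N - 1) / 2 : ℕ) : ℤ) * q ^ (n * (n - 1) / 2) := by
    rw [← zpow_add₀ hq0, ← zpow_add₀ hq0, ← zpow_add₀ hq0]
    congr 1
    apply Int.eq_of_mul_eq_mul_right (two_ne_zero)
    have h1 := nat_tri_cast j
    have h2 := nat_tri_cast N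
    have h3 := int_tri n
    rw [hn] at h3
    linear_combination h1 - h2 - h3
  calc q ^ ((j * (j - 1) / 2 : ℕ) : ℤ) * ((-1 : ℂ) ^ (j : ℤ) * z ^ (j : ℤ) * q ^ (-((N : ℤ) * j)))
      = ((-1 : ℂ) ^ (j : ℤ) * z ^ (j : ℤ))
          * (q ^ ((j * (j - 1) / 2 : ℕ) : ℤ) * q ^ (-((N : ℤ) * j))) := by ring
    _ = ((-1 : ℂ) ^ (N : ℤ) * (-1 : ℂ) ^ n * (z ^ (N : ℤ) * z ^ n))
          * (q ^ (-((N : ℤ) * N)) * q ^ ((N * (N - 1) / 2 : ℕ) : ℤ) * q ^ (n * (n - 1) / 2)) := by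
        rw [hsign, hzz, hqq]
    _ = _ := by ring

lemma finite_jtp {q z : ℂ} (hq : ‖q‖ < 1) (hq0 : q ≠ 0) (hz : z ≠ 0) (N : ℕ) :
    (∏ k ∈ range N, (1 - q ^ k * z)) * (∏ k ∈ range N, (1 - q ^ (k + 1) * z⁻¹)) * Pq q N
      = ∑ j ∈ range (2 * N + 1), Pq q N * Gq q (2 * N) j
          * ((-1) ^ ((j : ℤ) - N) * q ^ (((j : ℤ) - N) * (((j : ℤ) - N) - 1) / 2)
              * z ^ ((j : ℤ) - N)) := by
  set t : ℂ := -(z * q⁻¹ ^ N) with ht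
  have ht0 : t ≠ 0 := by
    rw [ht]
    exact neg_ne_zero.2 (mul_ne_zero hz (pow_ne_zero N (inv_ne_zero hq0)))
  have hC := cauchy_binom hq t (2 * N)
  -- split LHS of hC
  have hqN : q⁻¹ ^ N * q ^ N = 1 := by
    rw [inv_pow, inv_mul_cancel₀ (pow_ne_zero N hq0)]
  have h2 : ∀ k : ℕ, 1 + t * q ^ (N + k) = 1 - q ^ k * z := by
    intro k
    have e : q⁻¹ ^ N * q ^ (N + k) = q ^ k := by
      rw [pow_add, ← mul_assoc, hqN, one_mul]
    rw [ht]
    linear_combination (-z) * e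
  have h1 : ∀ k ∈ range N, 1 + t * q ^ k = t * q ^ k * (1 - q ^ (N - k) * z⁻¹) := by
    intro k hk
    have hk' : k < N := Finset.mem_range.mp hk
    have e : q ^ k * q ^ (N - k) = q ^ N := by
      rw [← pow_add]; congr 1; omega
    have e2 : z * z⁻¹ = 1 := mul_inv_cancel₀ hz
    rw [ht]
    field_simp
    linear_combination (-q⁻¹ ^ N) * e - hqN
  have hsplit : ∏ k ∈ range (2 * N), (1 + t * q ^ k)
      = (∏ k ∈ range N, (1 + t * q ^ k)) * ∏ k ∈ range N, (1 - q ^ k * z) := by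
    rw [two_mul, Finset.prod_range_add]
    congr 1
    exact Finset.prod_congr rfl fun k _ => h2 k
  have hfirst : ∏ k ∈ range N, (1 + t * q ^ k)
      = (t ^ N * q ^ (N * (N - 1) / 2)) * ∏ k ∈ range N, (1 - q ^ (k + 1) * z⁻¹) := by
    rw [Finset.prod_congr rfl h1, Finset.prod_mul_distrib, Finset.prod_mul_distrib,
      Finset.prod_const, Finset.card_range, Finset.prod_pow_eq_pow_sum, Finset.sum_range_id]
    congr 1
    refine (Finset.prod_congr rfl ?_).trans
      (Finset.prod_range_reflect (fun j => 1 - q ^ (j + 1) * z⁻¹) N)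
    intro k hk
    have hk' : k < N := Finset.mem_range.mp hk
    have : N - 1 - k + 1 = N - k := by omega
    simp only [this]
  rw [hsplit, hfirst] at hC
  -- now conclude
  apply mul_right_cancel₀ (mul_ne_zero (pow_ne_zero N ht0)
    (pow_ne_zero _ hq0) : t ^ N * q ^ (N * (N - 1) / 2) ≠ 0)
  rw [Finset.sum_mul]
  have hterm : ∀ j ∈ range (2 * N + 1),
      Pq q N * Gq q (2 * N) j
          * ((-1) ^ ((j : ℤ) - N) * q ^ (((j : ℤ) - N) * (((j : ℤ) - N) - 1) / 2)
              * z ^ ((j : ℤ) - N)) * (t ^ N * q ^ (N * (N - 1) / 2))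
        = Pq q N * (q ^ (j * (j - 1) / 2) * Gq q (2 * N) j * t ^ j) := by
    intro j _
    have := key_term hq0 hz N j
    rw [← ht] at this
    linear_combination (-(Pq q N * Gq q (2 * N) j)) * this
  rw [Finset.sum_congr rfl hterm, ← Finset.mul_sum, ← hC]
  ring

lemma sum_pow_le {r : ℝ} (hr0 : 0 ≤ r) (hr : r < 1) (m : ℕ) :
    ∑ j ∈ range m, r ^ (j + 1) ≤ r * (1 - r)⁻¹ := by
  have h1 : ∑ j ∈ range m, r ^ (j + 1) = r * ∑ j ∈ range m, r ^ j := by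
    rw [Finset.mul_sum]
    exact Finset.sum_congr rfl fun j _ => by ring
  rw [h1]
  apply mul_le_mul_of_nonneg_left _ hr0
  have := Summable.sum_le_tsum (range m) (fun i _ => pow_nonneg hr0 i)
    (summable_geometric_of_lt_one hr0 hr)
  rwa [tsum_geometric_of_lt_one hr0 hr] at this

lemma Pq_norm_le {q : ℂ} (hq : ‖q‖ < 1) (m : ℕ) :
    ‖Pq q m‖ ≤ Real.exp (‖q‖ * (1 - ‖q‖)⁻¹) := by
  rw [Pq, norm_prod]
  calc ∏ j ∈ range m, ‖1 - q ^ (j + 1)‖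
      ≤ ∏ j ∈ range m, Real.exp (‖q‖ ^ (j + 1)) := by
        apply Finset.prod_le_prod (fun j _ => norm_nonneg _)
        intro j _
        calc ‖1 - q ^ (j + 1)‖ ≤ ‖(1 : ℂ)‖ + ‖q ^ (j + 1)‖ := norm_sub_le _ _
          _ = 1 + ‖q‖ ^ (j + 1) := by rw [norm_one, norm_pow]
          _ ≤ Real.exp (‖q‖ ^ (j + 1)) := by
              have := Real.add_one_le_exp (‖q‖ ^ (j + 1))
              linarith
    _ = Real.exp (∑ j ∈ range m, ‖q‖ ^ (j + 1)) := (Real.exp_sum _ _).symm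
    _ ≤ Real.exp (‖q‖ * (1 - ‖q‖)⁻¹) :=
        Real.exp_le_exp.2 (sum_pow_le (norm_nonneg q) hq m)

lemma one_sub_ge_exp {x r : ℝ} (hx0 : 0 ≤ x) (hxr : x ≤ r) (hr : r < 1) :
    Real.exp (-(x * (1 - r)⁻¹)) ≤ 1 - x := by
  have hr1 : 0 < 1 - r := by linarith
  have hx1 : 0 < 1 - x := by linarith
  have h1 : x * (1 - x)⁻¹ ≤ x * (1 - r)⁻¹ := by
    apply mul_le_mul_of_nonneg_left _ hx0
    exact inv_anti₀ hr1 (by linarith)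
  have h2 : Real.exp (-(x * (1 - x)⁻¹)) ≤ 1 - x := by
    have h3 : 1 + x * (1 - x)⁻¹ ≤ Real.exp (x * (1 - x)⁻¹) := by
      have := Real.add_one_le_exp (x * (1 - x)⁻¹)
      linarith
    have h4 : 1 + x * (1 - x)⁻¹ = (1 - x)⁻¹ := by field_simp; ring
    rw [h4] at h3
    rw [Real.exp_neg, inv_le_comm₀ (Real.exp_pos _) hx1]
    exact h3
  calc Real.exp (-(x * (1 - r)⁻¹)) ≤ Real.exp (-(x * (1 - x)⁻¹)) := by
        apply Real.exp_le_exp.2; linarith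
    _ ≤ 1 - x := h2

lemma le_Pq_norm {q : ℂ} (hq : ‖q‖ < 1) (m : ℕ) :
    Real.exp (-(‖q‖ * (1 - ‖q‖)⁻¹ * (1 - ‖q‖)⁻¹)) ≤ ‖Pq q m‖ := by
  have hr0 := norm_nonneg q
  rw [Pq, norm_prod]
  calc Real.exp (-(‖q‖ * (1 - ‖q‖)⁻¹ * (1 - ‖q‖)⁻¹))
      ≤ Real.exp (-(∑ j ∈ range m, ‖q‖ ^ (j + 1) * (1 - ‖q‖)⁻¹)) := by
        apply Real.exp_le_exp.2
        rw [← Finset.sum_mul]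
        have h1 : 0 < (1 - ‖q‖)⁻¹ := inv_pos.2 (by linarith)
        have := sum_pow_le hr0 hq m
        nlinarith
    _ = ∏ j ∈ range m, Real.exp (-(‖q‖ ^ (j + 1) * (1 - ‖q‖)⁻¹)) := by
        rw [← Real.exp_sum, ← Finset.sum_neg_distrib]
    _ ≤ ∏ j ∈ range m, ‖1 - q ^ (j + 1)‖ := by
        apply Finset.prod_le_prod (fun j _ => (Real.exp_pos _).le)
        intro j _
        calc Real.exp (-(‖q‖ ^ (j + 1) * (1 - ‖q‖)⁻¹)) ≤ 1 - ‖q ^ (j + 1)‖ := by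
              rw [norm_pow]
              apply one_sub_ge_exp (pow_nonneg hr0 _) _ hq
              calc ‖q‖ ^ (j + 1) ≤ ‖q‖ ^ 1 :=
                    pow_le_pow_of_le_one hr0 hq.le (by omega)
                _ = ‖q‖ := pow_one _
          _ ≤ ‖1 - q ^ (j + 1)‖ := by
              have := norm_sub_norm_le (1 : ℂ) (q ^ (j + 1))
              rw [norm_one] at this
              linarith

lemma multipliable_qPoch {q : ℂ} (w : ℂ) (hq : ‖q‖ < 1) :
    Multipliable (fun k : ℕ => 1 - q ^ k * w) := by
  -- find K with ‖q‖ ^ K * ‖w‖ ≤ 1/2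
  have h0 : Tendsto (fun k : ℕ => ‖q‖ ^ k * ‖w‖) atTop (𝓝 (0 * ‖w‖)) :=
    (tendsto_pow_atTop_nhds_zero_of_lt_one (norm_nonneg q) hq).mul_const _
  rw [zero_mul] at h0
  obtain ⟨K, hK⟩ := (h0.eventually (eventually_le_nhds (by norm_num : (0:ℝ) < 1/2))).exists
  set f : ℕ → ℂ := fun k => 1 - q ^ k * w with hf
  have key : Multipliable (fun n : ℕ => f (n + K)) → Multipliable f := by
    intro htail
    have hinj : Function.Injective
        (fun n : ℕ => (⟨n + K, by simp⟩ : ({n : ℕ | n < K}ᶜ : Set ℕ))) := by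
      intro a b hab
      simpa [Subtype.ext_iff] using hab
    have hcompl : Multipliable ((f ∘ (↑) : ({n : ℕ | n < K}ᶜ : Set ℕ) → ℂ)) := by
      apply (Function.Injective.multipliable_iff hinj ?_).mp
      · exact htail
      · intro x hx
        exfalso
        apply hx
        have h := x.2
        simp only [Set.mem_compl_iff, Set.mem_setOf_eq, not_lt] at h
        exact ⟨(x : ℕ) - K, by ext; simp; omega⟩
    have hfinset : Multipliable ((f ∘ (↑) : ({n : ℕ | n < K} : Set ℕ) → ℂ)) :=
      (Set.finite_Iio K).multipliable _
    exact hfinset.mul_compl hcompl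
  apply key
  have hnorm : ∀ n : ℕ, ‖-(q ^ (n + K) * w)‖ ≤ 1 / 2 := by
    intro n
    rw [norm_neg, norm_mul, norm_pow, pow_add]
    calc ‖q‖ ^ n * ‖q‖ ^ K * ‖w‖ ≤ 1 * (‖q‖ ^ K * ‖w‖) := by
          rw [mul_assoc]
          apply mul_le_mul_of_nonneg_right (pow_le_one₀ (norm_nonneg q) hq.le)
          positivity
      _ ≤ 1 / 2 := by rw [one_mul]; exact hK
  have hne : ∀ (x : Unit) (n : ℕ), (fun n (_ : Unit) => 1 - q ^ (n + K) * w) n x ≠ 0 := by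
    intro _ n
    apply one_sub_ne_zero_of_norm_lt_one
    calc ‖q ^ (n + K) * w‖ = ‖-(q ^ (n + K) * w)‖ := (norm_neg _).symm
      _ ≤ 1 / 2 := hnorm n
      _ < 1 := by norm_num
  have hsum : ∀ (x : Unit), Summable fun n : ℕ =>
      Complex.log ((fun n (_ : Unit) => 1 - q ^ (n + K) * w) n x) := by
    intro _
    apply Summable.of_norm_bounded (g := fun n => 3 / 2 * (‖q‖ ^ K * ‖w‖) * ‖q‖ ^ n)
    · exact (summable_geometric_of_lt_one (norm_nonneg q) hq).mul_left _
    · intro n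
      show ‖Complex.log ((1 : ℂ) - q ^ (n + K) * w)‖ ≤ 3 / 2 * (‖q‖ ^ K * ‖w‖) * ‖q‖ ^ n
      have h1 : (1 : ℂ) - q ^ (n + K) * w = 1 + -(q ^ (n + K) * w) := by ring
      rw [h1]
      calc ‖Complex.log (1 + -(q ^ (n + K) * w))‖ ≤ 3 / 2 * ‖-(q ^ (n + K) * w)‖ :=
            Complex.norm_log_one_add_half_le_self (hnorm n)
        _ ≤ 3 / 2 * (‖q‖ ^ K * ‖w‖) * ‖q‖ ^ n := by
            rw [norm_neg, norm_mul, norm_pow, pow_add]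
            ring_nf
            nlinarith [pow_nonneg (norm_nonneg q) n, pow_nonneg (norm_nonneg q) K,
              norm_nonneg w, pow_le_one₀ (norm_nonneg q) hq.le (n := n)]
  have := Complex.multipliable_of_summable_log (hsum ())
  exact this

lemma tendsto_qPoch {q : ℂ} (w : ℂ) (hq : ‖q‖ < 1) :
    Tendsto (fun N => ∏ k ∈ range N, (1 - q ^ k * w)) atTop (𝓝 (qPochInf q w)) :=
  (multipliable_qPoch w hq).hasProd.tendsto_prod_nat

noncomputable def jtpTerm (q z : ℂ) (n : ℤ) : ℂ := (-1) ^ n * q ^ (n * (n - 1) / 2) * z ^ n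

lemma Pq_eq_partial (q : ℂ) (m : ℕ) : Pq q m = ∏ k ∈ range m, (1 - q ^ k * q) :=
  Finset.prod_congr rfl fun k _ => by rw [pow_succ]

lemma tendsto_Pq {q : ℂ} (hq : ‖q‖ < 1) :
    Tendsto (fun m => Pq q m) atTop (𝓝 (qPochInf q q)) := by
  have := tendsto_qPoch q hq
  apply this.congr
  intro m
  exact (Pq_eq_partial q m).symm

lemma le_qPoch_norm {q : ℂ} (hq : ‖q‖ < 1) :
    Real.exp (-(‖q‖ * (1 - ‖q‖)⁻¹ * (1 - ‖q‖)⁻¹)) ≤ ‖qPochInf q q‖ := by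
  have h1 : Tendsto (fun m => ‖Pq q m‖) atTop (𝓝 ‖qPochInf q q‖) :=
    (tendsto_Pq hq).norm
  exact ge_of_tendsto h1 (Eventually.of_forall fun m => le_Pq_norm hq m)

lemma qPoch_q_ne_zero {q : ℂ} (hq : ‖q‖ < 1) : qPochInf q q ≠ 0 := by
  intro h
  have := le_qPoch_norm hq
  rw [h, norm_zero] at this
  exact absurd this (not_le.2 (Real.exp_pos _))

lemma jtp_rec {q z : ℂ} (hq0 : q ≠ 0) (hz : z ≠ 0) (n : ℤ) :
    jtpTerm q z (n + 1) = -(q ^ n * z * jtpTerm q z n) := by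
  rw [jtpTerm, jtpTerm]
  have hm1 : (-1 : ℂ) ≠ 0 := by norm_num
  have h1 : (-1 : ℂ) ^ (n + 1) = -(-1 : ℂ) ^ n := by
    rw [zpow_add₀ hm1, zpow_one]; ring
  have h2 : z ^ (n + 1) = z ^ n * z := by rw [zpow_add₀ hz, zpow_one]
  have h3 : q ^ ((n + 1) * (n + 1 - 1) / 2) = q ^ (n * (n - 1) / 2) * q ^ n := by
    rw [← zpow_add₀ hq0]
    congr 1
    have ha := int_tri n
    have hb := int_tri (n + 1)
    apply Int.eq_of_mul_eq_mul_right (two_ne_zero)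
    ring_nf
    ring_nf at ha hb
    linarith [ha, hb]
  rw [h1, h2, h3]
  ring

lemma summable_norm_jtp {q z : ℂ} (hq : ‖q‖ < 1) (hq0 : q ≠ 0) (hz : z ≠ 0) :
    Summable (fun n : ℤ => ‖jtpTerm q z n‖) := by
  have hrpos : 0 < ‖q‖ := norm_pos_iff.2 hq0
  apply Summable.of_nat_of_neg_add_one
  · -- positive side
    apply summable_of_ratio_norm_eventually_le (by norm_num : (1:ℝ)/2 < 1)
    have h0 : Tendsto (fun k : ℕ => ‖q‖ ^ k * ‖z‖) atTop (𝓝 (0 * ‖z‖)) :=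
      (tendsto_pow_atTop_nhds_zero_of_lt_one (norm_nonneg q) hq).mul_const _
    rw [zero_mul] at h0
    filter_upwards [h0.eventually (eventually_le_nhds (by norm_num : (0:ℝ) < 1/2))] with k hk
    have := jtp_rec hq0 hz (k : ℤ)
    rw [show ((k : ℤ) + 1) = ((k + 1 : ℕ) : ℤ) from by push_cast; ring] at this
    rw [this]
    rw [norm_neg, norm_norm, norm_norm, norm_mul, norm_mul]
    rw [show ‖(q : ℂ) ^ (k : ℤ)‖ = ‖q‖ ^ k from by rw [zpow_natCast, norm_pow]]
    exact mul_le_mul_of_nonneg_right hk (norm_nonneg _)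
  · -- negative side
    apply summable_of_ratio_norm_eventually_le (by norm_num : (1:ℝ)/2 < 1)
    have h0 : Tendsto (fun k : ℕ => ‖q‖ ^ (k + 2) * ‖z‖⁻¹) atTop (𝓝 (0 * ‖z‖⁻¹)) := by
      apply Tendsto.mul_const
      exact (tendsto_pow_atTop_nhds_zero_of_lt_one (norm_nonneg q) hq).comp
        (tendsto_add_atTop_nat 2)
    rw [zero_mul] at h0
    filter_upwards [h0.eventually (eventually_le_nhds (by norm_num : (0:ℝ) < 1/2))] with k hk
    rw [norm_norm, norm_norm]
    have hrec := jtp_rec hq0 hz (-((k : ℤ) + 2))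
    rw [show (-((k : ℤ) + 2) + 1) = -((k : ℤ) + 1) from by ring] at hrec
    have hz0 : (0 : ℝ) < ‖z‖ := norm_pos_iff.2 hz
    have hnorm : ‖jtpTerm q z (-((k : ℤ) + 1))‖
        = ‖q‖⁻¹ ^ (k + 2) * ‖z‖ * ‖jtpTerm q z (-((k : ℤ) + 2))‖ := by
      rw [hrec, norm_neg, norm_mul, norm_mul]
      congr 2
      rw [show (-((k : ℤ) + 2)) = -(((k + 2 : ℕ) : ℤ)) from by push_cast; ring, zpow_neg,
        norm_inv, zpow_natCast, norm_pow, inv_pow]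
    have target_eq : ‖jtpTerm q z (-((k : ℤ) + 2))‖
        = ‖q‖ ^ (k + 2) * ‖z‖⁻¹ * ‖jtpTerm q z (-((k : ℤ) + 1))‖ := by
      have ha : ‖q‖ ≠ 0 := ne_of_gt hrpos
      have hb : ‖z‖ ≠ 0 := ne_of_gt hz0
      rw [hnorm, inv_pow]
      have hA0 : ‖q‖ ^ (k + 2) ≠ 0 := pow_ne_zero _ ha
      generalize hX : ‖jtpTerm q z (-((k : ℤ) + 2))‖ = X
      generalize hA : ‖q‖ ^ (k + 2) = A at hA0 ⊢
      rw [show A * ‖z‖⁻¹ * (A⁻¹ * ‖z‖ * X) = (A * A⁻¹) * (‖z‖ * ‖z‖⁻¹) * X from by ring,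
        mul_inv_cancel₀ hA0, mul_inv_cancel₀ hb, one_mul, one_mul]
    rw [show (-(((k + 1 : ℕ) : ℤ) + 1)) = -((k : ℤ) + 2) from by push_cast; ring, target_eq]
    exact mul_le_mul_of_nonneg_right hk (norm_nonneg _)

noncomputable def Fjtp (q z : ℂ) (N : ℕ) (n : ℤ) : ℂ :=
  if -(N : ℤ) ≤ n ∧ n ≤ N then Pq q N * Gq q (2 * N) ((n + N).toNat) * jtpTerm q z n else 0

lemma tsum_Fjtp (q z : ℂ) (N : ℕ) :
    ∑' n : ℤ, Fjtp q z N n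
      = ∑ j ∈ range (2 * N + 1), Pq q N * Gq q (2 * N) j * jtpTerm q z ((j : ℤ) - N) := by
  rw [tsum_eq_sum (s := Finset.Icc (-(N : ℤ)) N)
    (fun n hn => by
      rw [Fjtp, if_neg]
      rw [Finset.mem_Icc] at hn
      omega)]
  apply Finset.sum_nbij' (i := fun n : ℤ => (n + N).toNat) (j := fun j : ℕ => (j : ℤ) - N)
  · intro n hn
    rw [Finset.mem_Icc] at hn
    rw [Finset.mem_range]
    omega
  · intro j hj
    rw [Finset.mem_range] at hj
    rw [Finset.mem_Icc]
    omega
  · intro n hn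
    rw [Finset.mem_Icc] at hn
    omega
  · intro j hj
    rw [Finset.mem_range] at hj
    omega
  · intro n hn
    rw [Finset.mem_Icc] at hn
    rw [Fjtp, if_pos (by omega)]
    congr 2
    omega

lemma tendsto_toNat_add (n : ℤ) : Tendsto (fun N : ℕ => (n + N).toNat) atTop atTop := by
  apply tendsto_atTop_atTop.2
  intro b
  exact ⟨b + n.natAbs, fun N hN => by omega⟩

lemma tendsto_Fjtp {q z : ℂ} (hq : ‖q‖ < 1) (n : ℤ) :
    Tendsto (fun N => Fjtp q z N n) atTop (𝓝 (jtpTerm q z n)) := by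
  have hP := tendsto_Pq hq
  have hPne := qPoch_q_ne_zero hq
  have T2 : Tendsto (fun N : ℕ => Pq q (2 * N)) atTop (𝓝 (qPochInf q q)) :=
    hP.comp (tendsto_atTop_atTop.2 fun b => ⟨b, fun N hN => by omega⟩)
  have T3 : Tendsto (fun N : ℕ => Pq q ((n + N).toNat)) atTop (𝓝 (qPochInf q q)) :=
    hP.comp (tendsto_toNat_add n)
  have T4 : Tendsto (fun N : ℕ => Pq q ((-n + N).toNat)) atTop (𝓝 (qPochInf q q)) :=
    hP.comp (tendsto_toNat_add (-n))
  have hne : qPochInf q q * qPochInf q q ≠ 0 := mul_ne_zero hPne hPne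
  have T : Tendsto (fun N : ℕ =>
      Pq q N * Pq q (2 * N) / (Pq q ((n + N).toNat) * Pq q ((-n + N).toNat)) * jtpTerm q z n)
      atTop (𝓝 (qPochInf q q * qPochInf q q / (qPochInf q q * qPochInf q q) * jtpTerm q z n)) :=
    ((hP.mul T2).div (T3.mul T4) hne).mul_const _
  rw [div_self hne, one_mul] at T
  apply T.congr'
  filter_upwards [eventually_ge_atTop n.natAbs] with N hN
  rw [Fjtp, if_pos (by omega), Gq, if_pos (by omega : (n + N).toNat ≤ 2 * N),
    show 2 * N - (n + N).toNat = (-n + N).toNat from by omega]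
  ring

lemma Fjtp_bound {q z : ℂ} (hq : ‖q‖ < 1) (N : ℕ) (n : ℤ) :
    ‖Fjtp q z N n‖ ≤ Real.exp (‖q‖ * (1 - ‖q‖)⁻¹) ^ 2
      * (Real.exp (-(‖q‖ * (1 - ‖q‖)⁻¹ * (1 - ‖q‖)⁻¹)))⁻¹ ^ 2 * ‖jtpTerm q z n‖ := by
  set U := Real.exp (‖q‖ * (1 - ‖q‖)⁻¹) with hU
  set L := Real.exp (-(‖q‖ * (1 - ‖q‖)⁻¹ * (1 - ‖q‖)⁻¹)) with hL
  have hLpos : 0 < L := Real.exp_pos _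
  have hUpos : 0 < U := Real.exp_pos _
  rw [Fjtp]
  split_ifs with h
  · rw [Gq, if_pos (by omega : (n + N).toNat ≤ 2 * N), norm_mul, norm_mul, norm_div, norm_mul]
    have hkey : ‖Pq q N‖ * (‖Pq q (2 * N)‖ / (‖Pq q ((n + N).toNat)‖ * ‖Pq q (2 * N - (n + N).toNat)‖))
        ≤ U * (U / (L * L)) := by
      gcongr
      · exact (Pq_norm_le hq N).trans_eq rfl
      · exact Pq_norm_le hq _
      · exact le_Pq_norm hq _
      · exact le_Pq_norm hq _
    calc ‖Pq q N‖ * (‖Pq q (2 * N)‖ / (‖Pq q ((n + N).toNat)‖ * ‖Pq q (2 * N - (n + N).toNat)‖))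
          * ‖jtpTerm q z n‖
        ≤ U * (U / (L * L)) * ‖jtpTerm q z n‖ :=
          mul_le_mul_of_nonneg_right hkey (norm_nonneg _)
      _ = U ^ 2 * L⁻¹ ^ 2 * ‖jtpTerm q z n‖ := by
          field_simp
  · rw [norm_zero]
    positivity

lemma jtp_main {q z : ℂ} (hq : ‖q‖ < 1) (hq0 : q ≠ 0) (hz : z ≠ 0) :
    qPochInf q z * qPochInf q (q / z) * qPochInf q q = ∑' n : ℤ, jtpTerm q z n := by
  have hA := tendsto_qPoch z hq
  have hB : Tendsto (fun N => ∏ k ∈ range N, (1 - q ^ (k + 1) * z⁻¹)) atTop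
      (𝓝 (qPochInf q (q / z))) := by
    apply (tendsto_qPoch (q / z) hq).congr
    intro N
    apply Finset.prod_congr rfl
    intro k _
    rw [pow_succ, div_eq_mul_inv]
    ring_nf
  have hC := tendsto_Pq hq
  have hLHS := (hA.mul hB).mul hC
  have hRHS : Tendsto (fun N => ∑' n : ℤ, Fjtp q z N n) atTop
      (𝓝 (∑' n : ℤ, jtpTerm q z n)) := by
    apply tendsto_tsum_of_dominated_convergence
      (bound := fun n : ℤ => Real.exp (‖q‖ * (1 - ‖q‖)⁻¹) ^ 2
        * (Real.exp (-(‖q‖ * (1 - ‖q‖)⁻¹ * (1 - ‖q‖)⁻¹)))⁻¹ ^ 2 * ‖jtpTerm q z n‖)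
    · exact (summable_norm_jtp hq hq0 hz).mul_left _
    · exact fun n => tendsto_Fjtp hq n
    · exact Eventually.of_forall fun N n => Fjtp_bound hq N n
  have heq : ∀ N : ℕ, (∏ k ∈ range N, (1 - q ^ k * z))
      * (∏ k ∈ range N, (1 - q ^ (k + 1) * z⁻¹)) * Pq q N = ∑' n : ℤ, Fjtp q z N n := by
    intro N
    rw [tsum_Fjtp]
    have := finite_jtp hq hq0 hz N
    simpa only [jtpTerm] using this
  exact tendsto_nhds_unique (hLHS.congr fun N => heq N) hRHS

theorem jacobi_triple_product (q z : ℂ) (hq : ‖q‖ < 1) (hz : z ≠ 0) :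
    qPochInf q z * qPochInf q (q / z) * qPochInf q q
      = ∑' n : ℤ, (-1) ^ n * q ^ (n * (n - 1) / 2) * z ^ n := by
  by_cases hq0 : q = 0
  · subst hq0
    have h1 : qPochInf 0 z = 1 - z := by
      rw [qPochInf]
      rw [tprod_eq_mulSingle 0 (fun k hk => by
        rw [zero_pow hk]
        ring)]
      simp
    have h2 : qPochInf 0 (0 / z) = 1 := by
      rw [qPochInf]
      have : ∀ k : ℕ, (1 : ℂ) - 0 ^ k * (0 / z) = 1 := by
        intro k
        simp
      simp only [this]
      exact tprod_one
    have h3 : qPochInf 0 0 = 1 := by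
      rw [qPochInf]
      rw [tprod_eq_mulSingle 0 (fun k hk => by
        rw [zero_pow hk]
        ring)]
      simp
    rw [h1, h2, h3]
    rw [tsum_eq_sum (s := ({0, 1} : Finset ℤ)) (fun n hn => by
      have hne : n * (n - 1) / 2 ≠ 0 := by
        simp only [Finset.mem_insert, Finset.mem_singleton] at hn
        push_neg at hn
        obtain ⟨h0, h1⟩ := hn
        have := int_tri n
        intro hcontra
        rw [hcontra] at this
        simp at this
        rcases this with h | h <;> omega
      rw [zero_zpow _ hne]
      ring)]
    rw [Finset.sum_insert (by norm_num), Finset.sum_singleton]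
    norm_num
    ring
  · exact jtp_main hq hq0 hz
end

section
/- A nonzero holomorphic function f on ℂ* satisfying f(pz) = C z^{−k} f(z) with 0<|p|<1 has exactly k zeros (counted with multiplicity) in each fundamental annulus {z : r ≤ |z| < r/|p|}; in particular k ≥ 0, and k = 0 forces f to have no zeros. -/
open Complex Set Metric Filter intervalIntegral

private lemma analyticAt_deriv' {f : ℂ → ℂ} {x : ℂ} (h : AnalyticAt ℂ f x) :
    AnalyticAt ℂ (deriv f) x := by
  have := ((ContinuousLinearMap.apply ℂ ℂ (1:ℂ)).analyticAt _).comp h.fderiv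
  exact this.congr (by
    filter_upwards with z
    simp [Function.comp, ContinuousLinearMap.apply_apply, fderiv_apply_one_eq_deriv])

private lemma analyticAt_zpow' {z : ℂ} (h : z ≠ 0) (m : ℤ) :
    AnalyticAt ℂ (fun w : ℂ => w ^ m) z := by
  induction m using Int.rec with
  | ofNat n => simp only [Int.ofNat_eq_coe, zpow_natCast]; exact analyticAt_id.pow n
  | negSucc n =>
      simp only [zpow_negSucc]
      exact (analyticAt_id.pow (n+1)).inv (pow_ne_zero _ h)

private lemma circle_scale (g : ℂ → ℂ) (ρ : ℝ) (p : ℂ) :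
    (∮ z in C(0, ρ), p * g (p * z)) = ∮ z in C(0, ‖p‖ * ρ), g z := by
  have key : ∀ θ : ℝ, p * circleMap 0 ρ θ = circleMap 0 (‖p‖ * ρ) (θ + p.arg) := by
    intro θ
    calc p * circleMap 0 ρ θ
        = (↑‖p‖ * Complex.exp (↑p.arg * I)) * (↑ρ * Complex.exp (↑θ * I)) := by
          rw [Complex.norm_mul_exp_arg_mul_I]; simp [circleMap]
      _ = circleMap 0 (‖p‖*ρ) (θ + p.arg) := by
          simp only [circleMap, zero_add, Complex.ofReal_mul,
            Complex.ofReal_add, add_mul, Complex.exp_add]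
          ring
  set F : ℝ → ℂ := fun θ => circleMap 0 (‖p‖*ρ) θ * I * g (circleMap 0 (‖p‖*ρ) θ) with hF
  have hper : Function.Periodic F (2*Real.pi) := by
    intro θ; simp only [hF, periodic_circleMap _ _ θ]
  have hpt : ∀ θ : ℝ, circleMap 0 ρ θ * I * (p * g (p * circleMap 0 ρ θ)) = F (θ + p.arg) := by
    intro θ; simp only [hF, ← key θ]; ring
  show (∫ θ in (0:ℝ)..2*Real.pi, deriv (circleMap 0 ρ) θ • (p * g (p * circleMap 0 ρ θ)))
      = ∫ θ in (0:ℝ)..2*Real.pi, deriv (circleMap 0 (‖p‖*ρ)) θ • g (circleMap 0 (‖p‖*ρ) θ)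
  simp only [deriv_circleMap, smul_eq_mul]
  calc (∫ θ in (0:ℝ)..2*Real.pi, circleMap 0 ρ θ * I * (p * g (p * circleMap 0 ρ θ)))
      = ∫ θ in (0:ℝ)..2*Real.pi, F (θ + p.arg) := by
        refine intervalIntegral.integral_congr fun θ _ => hpt θ
    _ = ∫ θ in (0+p.arg)..(2*Real.pi+p.arg), F θ := intervalIntegral.integral_comp_add_right F p.arg
    _ = ∫ θ in p.arg..(p.arg+2*Real.pi), F θ := by rw [zero_add, add_comm]
    _ = ∫ θ in (0:ℝ)..(0+2*Real.pi), F θ := hper.intervalIntegral_add_eq p.arg 0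
    _ = ∫ θ in (0:ℝ)..2*Real.pi, F θ := by rw [zero_add]

private lemma LD_funcEq {p C : ℂ} {k : ℤ} {f : ℂ → ℂ} (hp : p ≠ 0) (hC : C ≠ 0)
    (hfa : ∀ z : ℂ, z ≠ 0 → AnalyticAt ℂ f z)
    (hfunc : ∀ z : ℂ, z ≠ 0 → f (p * z) = C * z ^ (-k) * f z)
    {z : ℂ} (hz : z ≠ 0) (hfz : f z ≠ 0) :
    p * (deriv f (p*z) / f (p*z)) = deriv f z / f z - k / z := by
  have hpz : p * z ≠ 0 := mul_ne_zero hp hz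
  have hev : (fun w => f (p*w)) =ᶠ[nhds z] (fun w => C * w ^ (-k) * f w) := by
    filter_upwards [eventually_ne_nhds hz] with w hw using hfunc w hw
  have hdL : HasDerivAt (fun w => f (p * w)) (deriv f (p*z) * (p * 1)) z := by
    exact ((hfa _ hpz).differentiableAt.hasDerivAt).comp z ((hasDerivAt_id z).const_mul p)
  have hdR : HasDerivAt (fun w => C * w ^ (-k) * f w)
      (C * (↑(-k) * z^(-k-1)) * f z + C * z^(-k) * deriv f z) z :=
    ((hasDerivAt_zpow (-k) z (Or.inl hz)).const_mul C).mul (hfa z hz).differentiableAt.hasDerivAt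
  have heq : deriv f (p*z) * (p*1) =
      C * (↑(-k) * z^(-k-1)) * f z + C * z^(-k) * deriv f z := by
    rw [← hdL.deriv, ← hdR.deriv]
    exact hev.deriv_eq
  rw [zpow_sub_one₀ hz (-k)] at heq
  rw [hfunc z hz]
  have hzk : (z:ℂ) ^ (-k) ≠ 0 := zpow_ne_zero _ hz
  have hA : C * z ^ (-k) ≠ 0 := mul_ne_zero hC hzk
  have h2 : deriv f (p*z) * p = C * z^(-k) * (deriv f z - k * f z / z) := by
    rw [mul_one] at heq; rw [heq]; push_cast; ring
  calc p * (deriv f (p*z) / (C * z^(-k) * f z))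
      = (deriv f (p*z) * p) / (C * z^(-k) * f z) := by ring
    _ = (C * z^(-k) * (deriv f z - k * f z / z)) / (C * z^(-k) * f z) := by rw [h2]
    _ = (deriv f z - k * f z / z) / f z := mul_div_mul_left _ _ hA
    _ = deriv f z / f z - k / z := by field_simp

private lemma func_int {p C : ℂ} {k : ℤ} {f : ℂ → ℂ} (hp : p ≠ 0) (hC : C ≠ 0)
    (hfa : ∀ z : ℂ, z ≠ 0 → AnalyticAt ℂ f z)
    (hfunc : ∀ z : ℂ, z ≠ 0 → f (p * z) = C * z ^ (-k) * f z)
    {ρ : ℝ} (hρ : 0 < ρ) (hb : ∀ z : ℂ, ‖z‖ = ρ → f z ≠ 0) :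
    (∮ z in C(0, ρ), deriv f z / f z) - (∮ z in C(0, ‖p‖*ρ), deriv f z / f z)
      = 2 * Real.pi * I * k := by
  have hsc := circle_scale (fun z => deriv f z / f z) ρ p
  have hne : ∀ z : ℂ, ‖z‖ = ρ → z ≠ 0 := fun z h => by
    intro h0; rw [h0] at h; simp at h; linarith [hρ, h]
  have hcongr : (∮ z in C(0, ρ), p * (deriv f (p*z) / f (p*z)))
      = ∮ z in C(0, ρ), (deriv f z / f z - (k:ℂ) / z) := by
    refine circleIntegral.integral_congr hρ.le fun z hzs => ?_
    have hzρ : ‖z‖ = ρ := by simpa [Complex.dist_eq] using hzs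
    exact LD_funcEq hp hC hfa hfunc (hne z hzρ) (hb z hzρ)
  have hLDcont : ContinuousOn (fun z => deriv f z / f z) (sphere (0:ℂ) ρ) := by
    intro z hzs
    have hzρ : ‖z‖ = ρ := by simpa [Complex.dist_eq] using hzs
    have hz := hne z hzρ
    exact (((analyticAt_deriv' (hfa z hz)).div (hfa z hz) (hb z hzρ)).continuousAt).continuousWithinAt
  have hint1 : CircleIntegrable (fun z => deriv f z / f z) 0 ρ :=
    ContinuousOn.circleIntegrable hρ.le hLDcont
  have hint2 : CircleIntegrable (fun z : ℂ => (k:ℂ) / z) 0 ρ := by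
    refine ContinuousOn.circleIntegrable hρ.le ?_
    intro z hzs
    have hz := hne z (by simpa [Complex.dist_eq] using hzs)
    exact (continuousAt_const.div continuousAt_id hz).continuousWithinAt
  have hsub : (∮ z in C(0, ρ), (deriv f z / f z - (k:ℂ) / z))
      = (∮ z in C(0, ρ), deriv f z / f z) - (∮ z in C(0, ρ), (k:ℂ) / z) :=
    circleIntegral.integral_sub hint1 hint2
  have hkz : (∮ z in C(0, ρ), (k:ℂ) / z) = 2 * Real.pi * I * k := by
    have : (∮ z in C(0, ρ), (k:ℂ) / z) = ∮ z in C(0, ρ), (k:ℂ) * (z - 0)⁻¹ := by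
      refine circleIntegral.integral_congr hρ.le fun z _ => ?_
      rw [sub_zero, div_eq_mul_inv]
    rw [this, circleIntegral.integral_const_mul,
      circleIntegral.integral_sub_inv_of_mem_ball (by simpa using hρ)]
    ring
  rw [← hsc] at *
  rw [hcongr, hsub, hkz]
  ring
private lemma circleIntegral_finset_sum' {ι : Type*} (t : Finset ι) (F : ι → ℂ → ℂ) (c : ℂ) (R : ℝ)
    (h : ∀ i ∈ t, CircleIntegrable (F i) c R) :
    (∮ z in C(c, R), (∑ i ∈ t, F i z)) = ∑ i ∈ t, ∮ z in C(c, R), F i z := by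
  simp only [circleIntegral]
  rw [← intervalIntegral.integral_finset_sum (fun i hi => (h i hi).out)]
  refine intervalIntegral.integral_congr fun θ _ => ?_
  simp [Finset.mul_sum]

private lemma residue_count {f : ℂ → ℂ} {ρ1 ρ2 : ℝ} (h1 : 0 < ρ1) (h12 : ρ1 ≤ ρ2)
    (hA : ∀ z : ℂ, ρ1 ≤ ‖z‖ → ‖z‖ ≤ ρ2 → AnalyticAt ℂ f z)
    (s : Finset ℂ) (n : ℂ → ℕ)
    (hs : ∀ z : ℂ, z ∈ s ↔ (ρ1 ≤ ‖z‖ ∧ ‖z‖ ≤ ρ2 ∧ f z = 0))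
    (hsn : ∀ z ∈ s, ∃ g : ℂ → ℂ, AnalyticAt ℂ g z ∧ g z ≠ 0 ∧
      ∀ᶠ w in nhds z, f w = (w - z)^(n z) * g w)
    (hb : ∀ z : ℂ, (‖z‖ = ρ1 ∨ ‖z‖ = ρ2) → f z ≠ 0) :
    (∮ z in C(0, ρ2), deriv f z / f z) - (∮ z in C(0, ρ1), deriv f z / f z)
      = 2 * Real.pi * I * ∑ z ∈ s, (n z : ℂ) := by
  classical
  have hssub : ∀ z ∈ s, ρ1 < ‖z‖ ∧ ‖z‖ < ρ2 := by
    intro z hz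
    obtain ⟨hz1, hz2, hz0⟩ := (hs z).1 hz
    exact ⟨lt_of_le_of_ne hz1 (fun h => hb z (Or.inl h.symm) hz0),
      lt_of_le_of_ne hz2 (fun h => hb z (Or.inr h) hz0)⟩
  set Q : ℂ → ℂ := fun w => ∑ z ∈ s, (n z : ℂ) * (w - z)⁻¹ with hQ
  set gg : ℂ → ℂ → ℂ := fun z0 => if hz : z0 ∈ s then (hsn z0 hz).choose else fun _ => 1
    with hggdef
  have hgg : ∀ z0 (hz : z0 ∈ s), AnalyticAt ℂ (gg z0) z0 ∧ gg z0 z0 ≠ 0 ∧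
      ∀ᶠ w in nhds z0, f w = (w - z0)^(n z0) * gg z0 w := by
    intro z0 hz
    simp only [hggdef, dif_pos hz]
    exact (hsn z0 hz).choose_spec
  set H : ℂ → ℂ := fun w => if w ∈ s then
      deriv (gg w) w / gg w w - ∑ z ∈ s.erase w, (n z : ℂ) * (w - z)⁻¹
    else deriv f w / f w - Q w with hH
  have hHa : ∀ w : ℂ, ρ1 ≤ ‖w‖ → ‖w‖ ≤ ρ2 → AnalyticAt ℂ H w := by
    intro w hw1 hw2
    by_cases hws : w ∈ s
    · obtain ⟨hg, hg0, hev⟩ := hgg w hws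
      have hn1 : 1 ≤ n w := by
        rcases Nat.eq_zero_or_pos (n w) with h0 | h
        · exfalso
          have hself := hev.self_of_nhds
          rw [h0, pow_zero, one_mul] at hself
          exact hg0 (hself ▸ ((hs w).1 hws).2.2)
        · exact h
      obtain ⟨m, hm⟩ : ∃ m, n w = m + 1 := ⟨n w - 1, (Nat.succ_pred_eq_of_pos hn1).symm⟩
      have hAan : AnalyticAt ℂ (fun u => deriv (gg w) u / gg w u -
          ∑ z ∈ s.erase w, (n z : ℂ) * (u - z)⁻¹) w := by
        refine ((analyticAt_deriv' hg).div hg hg0).sub ?_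
        refine Finset.analyticAt_fun_sum _ (fun z hz => ?_)
        have hzw : w ≠ z := (Finset.ne_of_mem_erase hz).symm
        exact analyticAt_const.mul
          ((analyticAt_id.sub analyticAt_const).inv (sub_ne_zero.2 hzw))
      refine hAan.congr ?_
      have hgne : ∀ᶠ u in nhds w, gg w u ≠ 0 := hg.continuousAt.eventually_ne hg0
      have hgan : ∀ᶠ u in nhds w, AnalyticAt ℂ (gg w) u := hg.eventually_analyticAt
      have hder : ∀ᶠ u in nhds w,
          deriv f u = deriv (fun x => (x - w)^(n w) * gg w x) u :=
        Filter.EventuallyEq.deriv hev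
      have hclo : ∀ᶠ u in nhds w, u ∉ s.erase w := by
        refine (Set.Finite.isClosed (Finset.finite_toSet _)).isOpen_compl.mem_nhds ?_
        simp
      filter_upwards [hev, hgne, hgan, hder, hclo] with u h1u h2u h3u h4u h5u
      by_cases huw : u = w
      · subst huw
        simp only [hH, if_pos hws]
      · have hus : u ∉ s := fun hu => h5u (Finset.mem_erase.2 ⟨huw, hu⟩)
        have huw' : u - w ≠ 0 := sub_ne_zero.2 huw
        show _ = H u
        simp only [hH, if_neg hus]
        have hφ : deriv (fun x => (x - w)^(n w) * gg w x) u
            = (n w) * (u - w)^(n w - 1) * 1 * gg w u + (u - w)^(n w) * deriv (gg w) u :=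
          ((((hasDerivAt_id u).sub_const w).pow _).mul
            h3u.differentiableAt.hasDerivAt).deriv
        have hLD : deriv f u / f u = (n w) / (u - w) + deriv (gg w) u / gg w u := by
          rw [h4u, hφ, h1u, hm]
          simp only [Nat.add_sub_cancel]
          field_simp
          ring
        have hQu : Q u = (n w : ℂ) * (u - w)⁻¹ + ∑ z ∈ s.erase w, (n z : ℂ) * (u - z)⁻¹ := by
          rw [hQ]
          exact (Finset.add_sum_erase s _ hws).symm
        rw [hLD, hQu]
        ring
    · have hfw : f w ≠ 0 := fun h0 => hws ((hs w).2 ⟨hw1, hw2, h0⟩)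
      have hQa : AnalyticAt ℂ Q w := by
        refine Finset.analyticAt_fun_sum _ (fun z hz => ?_)
        have hzw : w ≠ z := fun h => hws (h ▸ hz)
        exact analyticAt_const.mul
          ((analyticAt_id.sub analyticAt_const).inv (sub_ne_zero.2 hzw))
      refine (((analyticAt_deriv' (hA w hw1 hw2)).div (hA w hw1 hw2) hfw).sub hQa).congr ?_
      have hclo : ∀ᶠ u in nhds w, u ∉ s := by
        refine (Set.Finite.isClosed (Finset.finite_toSet _)).isOpen_compl.mem_nhds ?_
        simpa using hws
      filter_upwards [hclo] with u hu
      simp only [Pi.sub_apply, Pi.div_apply, hH, if_neg hu]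
  have hHint : (∮ z in C(0, ρ2), H z) = ∮ z in C(0, ρ1), H z := by
    refine circleIntegral_eq_of_differentiable_on_annulus_off_countable h1 h12
      Set.countable_empty ?_ ?_
    · intro z hz
      obtain ⟨hz2, hz1⟩ := hz
      rw [Metric.mem_closedBall, Complex.dist_eq, sub_zero] at hz2
      rw [Metric.mem_ball, Complex.dist_eq, sub_zero] at hz1
      exact ((hHa z (le_of_not_gt hz1) hz2).continuousAt).continuousWithinAt
    · intro z hz
      obtain ⟨⟨hz2, hz1⟩, -⟩ := hz
      rw [Metric.mem_ball, Complex.dist_eq, sub_zero] at hz2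
      rw [Metric.mem_closedBall, Complex.dist_eq, sub_zero] at hz1
      exact (hHa z (le_of_lt (lt_of_not_ge hz1)) hz2.le).differentiableAt
  have dec : ∀ ρ : ℝ, ρ1 ≤ ρ → ρ ≤ ρ2 → (∀ w : ℂ, ‖w‖ = ρ → f w ≠ 0) →
      (∮ z in C(0, ρ), deriv f z / f z)
        = (∮ z in C(0, ρ), H z) + ∑ z ∈ s, (n z : ℂ) * ∮ w in C(0, ρ), (w - z)⁻¹ := by
    intro ρ hρ1 hρ2 hbρ
    have hρ0 : 0 < ρ := lt_of_lt_of_le h1 hρ1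
    have hnots : ∀ w : ℂ, ‖w‖ = ρ → w ∉ s := fun w hwρ hwm =>
      hbρ w hwρ ((hs w).1 hwm).2.2
    have hQan : ∀ w : ℂ, ‖w‖ = ρ → AnalyticAt ℂ Q w := by
      intro w hw
      refine Finset.analyticAt_fun_sum _ (fun z hz => ?_)
      have hzw : w ≠ z := fun h => hnots w hw (h ▸ hz)
      exact analyticAt_const.mul
        ((analyticAt_id.sub analyticAt_const).inv (sub_ne_zero.2 hzw))
    have hHcont : ContinuousOn H (Metric.sphere (0:ℂ) ρ) := by
      intro w hw
      rw [mem_sphere_zero_iff_norm] at hw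
      exact ((hHa w (hw ▸ hρ1) (hw ▸ hρ2)).continuousAt).continuousWithinAt
    have hQcont : ContinuousOn Q (Metric.sphere (0:ℂ) ρ) := by
      intro w hw
      rw [mem_sphere_zero_iff_norm] at hw
      exact (hQan w hw).continuousAt.continuousWithinAt
    have hHQint : CircleIntegrable (fun w => H w + Q w) 0 ρ :=
      ContinuousOn.circleIntegrable hρ0.le (hHcont.add hQcont)
    have hQint : CircleIntegrable Q 0 ρ :=
      ContinuousOn.circleIntegrable hρ0.le hQcont
    have e1 : (∮ z in C(0, ρ), deriv f z / f z) = ∮ z in C(0, ρ), (H z + Q z) := by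
      refine circleIntegral.integral_congr hρ0.le fun w hw => ?_
      rw [mem_sphere_zero_iff_norm] at hw
      have hwn := hnots w hw
      simp only [hH, if_neg hwn]
      ring
    have e2 : (∮ z in C(0, ρ), (H z + Q z)) = (∮ z in C(0, ρ), H z) + ∮ z in C(0, ρ), Q z := by
      have hsub := circleIntegral.integral_sub hHQint hQint
      have e3 : (∮ z in C(0, ρ), (H z + Q z - Q z)) = ∮ z in C(0, ρ), H z :=
        circleIntegral.integral_congr hρ0.le fun w _ => by ring
      rw [e3] at hsub
      linear_combination -hsub
    have e4 : (∮ z in C(0, ρ), Q z) = ∑ z ∈ s, (n z : ℂ) * ∮ w in C(0, ρ), (w - z)⁻¹ := by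
      rw [hQ]
      rw [circleIntegral_finset_sum' s (fun z w => (n z : ℂ) * (w - z)⁻¹) 0 ρ ?_]
      · exact Finset.sum_congr rfl fun z hz => circleIntegral.integral_const_mul _ _ _ _
      · intro z hz
        refine ContinuousOn.circleIntegrable hρ0.le ?_
        intro w hw
        rw [mem_sphere_zero_iff_norm] at hw
        have hzw : w ≠ z := fun h => hnots w hw (h ▸ hz)
        exact (continuousAt_const.mul ((continuousAt_id.sub continuousAt_const).inv₀
          (sub_ne_zero.2 hzw))).continuousWithinAt
    rw [e1, e2, e4]
  have hinner : ∀ z ∈ s, (∮ w in C(0, ρ1), (w - z)⁻¹) = 0 := by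
    intro z hz
    have hz1 := (hssub z hz).1
    refine circleIntegral_eq_zero_of_differentiable_on_off_countable h1.le
      Set.countable_empty ?_ ?_
    · intro w hw
      rw [mem_closedBall_zero_iff] at hw
      have hwz : w ≠ z := fun h => by rw [h] at hw; linarith
      exact ((continuousAt_id.sub continuousAt_const).inv₀
        (sub_ne_zero.2 hwz)).continuousWithinAt
    · intro w hw
      obtain ⟨hw', -⟩ := hw
      rw [mem_ball_zero_iff] at hw'
      have hwz : w ≠ z := fun h => by rw [h] at hw'; linarith
      exact (differentiableAt_id.sub_const z).inv (sub_ne_zero.2 hwz)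
  have houter : ∀ z ∈ s, (∮ w in C(0, ρ2), (w - z)⁻¹) = 2 * Real.pi * I := by
    intro z hz
    refine circleIntegral.integral_sub_inv_of_mem_ball ?_
    rw [mem_ball_zero_iff]
    exact (hssub z hz).2
  have hsum2 : (∑ z ∈ s, (n z : ℂ) * ∮ w in C(0, ρ2), (w - z)⁻¹)
      = 2 * Real.pi * I * ∑ z ∈ s, (n z : ℂ) := by
    rw [Finset.mul_sum]
    exact Finset.sum_congr rfl fun z hz => by rw [houter z hz]; ring
  have hsum1 : (∑ z ∈ s, (n z : ℂ) * ∮ w in C(0, ρ1), (w - z)⁻¹) = 0 :=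
    Finset.sum_eq_zero fun z hz => by rw [hinner z hz, mul_zero]
  rw [dec ρ2 h12 le_rfl (fun w hw => hb w (Or.inr hw)),
    dec ρ1 le_rfl h12 (fun w hw => hb w (Or.inl hw)), hHint, hsum2, hsum1]
  ring
theorem theta_function_zero_count (p C : ℂ) (k : ℤ) (f : ℂ → ℂ)
    (hp0 : 0 < ‖p‖) (hp1 : ‖p‖ < 1) (hC : C ≠ 0)
    (hfa : ∀ z : ℂ, z ≠ 0 → AnalyticAt ℂ f z)
    (hfunc : ∀ z : ℂ, z ≠ 0 → f (p * z) = C * z ^ (-k) * f z)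
    (hne : ∃ z : ℂ, z ≠ 0 ∧ f z ≠ 0) :
    0 ≤ k ∧ (k = 0 → ∀ z : ℂ, z ≠ 0 → f z ≠ 0) ∧
      ∀ r : ℝ, 0 < r →
        ∃ s : Finset ℂ,
          (∀ z : ℂ, z ∈ s ↔ (r ≤ ‖z‖ ∧ ‖z‖ < r / ‖p‖ ∧ f z = 0)) ∧
          (∑ z ∈ s, (if h : z ≠ 0 then ((analyticOrderAt f z).toNat) else 0)) = k.toNat := by
  classical
  have hp' : p ≠ 0 := norm_pos_iff.mp hp0
  -- f does not vanish identically near any point of ℂ*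
  have hnloc : ∀ z : ℂ, z ≠ 0 → ¬ (∀ᶠ w in nhds z, f w = 0) := by
    intro z hz hev
    obtain ⟨z1, hz1, hfz1⟩ := hne
    have hU : IsPreconnected ({(0:ℂ)}ᶜ) :=
      (isConnected_compl_singleton_of_one_lt_rank
        (by rw [Complex.rank_real_complex]; norm_num) 0).isPreconnected
    have heq := AnalyticOnNhd.eqOn_zero_of_preconnected_of_eventuallyEq_zero
      (f := f) (U := {(0:ℂ)}ᶜ) (fun w hw => hfa w hw) hU (z₀ := z) hz hev
    exact hfz1 (heq hz1)
  set m : ℂ → ℕ := fun z => if hz : z ≠ 0 then (analyticOrderAt f z).toNat else 0 with hm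
  have hordfin : ∀ z : ℂ, z ≠ 0 → ∃ g : ℂ → ℂ, AnalyticAt ℂ g z ∧ g z ≠ 0 ∧
      ∀ᶠ w in nhds z, f w = (w - z) ^ (m z) * g w := by
    intro z hz
    have hne' : analyticOrderAt f z ≠ ⊤ := by
      intro h
      exact hnloc z hz (analyticOrderAt_eq_top.mp h)
    have hord : analyticOrderAt f z = ((analyticOrderAt f z).toNat : ℕ∞) := (ENat.coe_toNat hne').symm
    obtain ⟨g, h1, h2, h3⟩ := (hfa z hz).analyticOrderAt_eq_natCast.mp hord
    refine ⟨g, h1, h2, ?_⟩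
    have hmz : m z = (analyticOrderAt f z).toNat := by simp only [hm, dif_pos hz]
    rw [hmz]
    simpa [smul_eq_mul] using h3
  have hmpos : ∀ z : ℂ, z ≠ 0 → f z = 0 → 1 ≤ m z := by
    intro z hz hfz
    obtain ⟨g, hg, hg0, hev⟩ := hordfin z hz
    rcases Nat.eq_zero_or_pos (m z) with h0 | h
    · exfalso
      have hself := hev.self_of_nhds
      rw [h0, pow_zero, one_mul] at hself
      exact hg0 (hself ▸ hfz)
    · exact h
  have hzero_mul : ∀ z : ℂ, z ≠ 0 → (f (p * z) = 0 ↔ f z = 0) := by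
    intro z hz
    rw [hfunc z hz]
    constructor
    · intro h
      rcases mul_eq_zero.mp h with h' | h'
      · exact absurd h' (mul_ne_zero hC (zpow_ne_zero _ hz))
      · exact h'
    · intro h; rw [h, mul_zero]
  -- finiteness of zeros in compact annuli
  have hfin : ∀ a b : ℝ, 0 < a → {z : ℂ | a ≤ ‖z‖ ∧ ‖z‖ ≤ b ∧ f z = 0}.Finite := by
    intro a b ha
    have hK : IsCompact (Metric.closedBall (0:ℂ) b \ Metric.ball 0 a) :=
      (isCompact_closedBall 0 b).diff isOpen_ball
    have hU : ∀ z ∈ (Metric.closedBall (0:ℂ) b \ Metric.ball 0 a),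
        {w : ℂ | w ≠ z → f w ≠ 0} ∈ nhds z := by
      intro z hzK
      have hz : z ≠ 0 := by
        intro h0
        exact hzK.2 (by rw [h0, mem_ball_zero_iff]; simpa using ha)
      have hev : ∀ᶠ w in nhdsWithin z {z}ᶜ, f w ≠ 0 :=
        ((hfa z hz).eventually_eq_zero_or_eventually_ne_zero).resolve_left (hnloc z hz)
      rw [eventually_nhdsWithin_iff] at hev
      exact hev.mono (fun w hw hwz => hw hwz)
    obtain ⟨t, htK, hcov⟩ := hK.elim_nhds_subcover _ hU
    refine Set.Finite.subset t.finite_toSet ?_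
    rintro z ⟨hza, hzb, hzf⟩
    have hzK : z ∈ Metric.closedBall (0:ℂ) b \ Metric.ball 0 a :=
      ⟨mem_closedBall_zero_iff.2 hzb, fun h => absurd (mem_ball_zero_iff.1 h) (not_lt.2 hza)⟩
    obtain ⟨x, hxt, hzU⟩ := Set.mem_iUnion₂.mp (hcov hzK)
    have hzx : z = x := by
      by_contra hne'
      exact (hzU hne') hzf
    rw [hzx]
    exact hxt
  -- the core count
  have core : ∀ r : ℝ, 0 < r → ∃ s : Finset ℂ,
      (∀ z : ℂ, z ∈ s ↔ (r ≤ ‖z‖ ∧ ‖z‖ < r / ‖p‖ ∧ f z = 0)) ∧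
      (k : ℂ) = ∑ z ∈ s, (m z : ℂ) := by
    intro r hr
    have hpr : 0 < ‖p‖ * r := by positivity
    set T : Finset ℝ := ((hfin (‖p‖*r) r hpr).toFinset.image fun z => ‖z‖).filter (· < r)
      with hT
    set Tb : Finset ℝ := insert (‖p‖*r) T with hTb
    have hTbne : Tb.Nonempty := Finset.insert_nonempty _ _
    set b : ℝ := Tb.max' hTbne with hbdef
    have hblt : b < r := by
      rw [hbdef]
      rw [Finset.max'_lt_iff]
      intro x hx
      rcases Finset.mem_insert.mp hx with h | h
      · rw [h]; nlinarith
      · exact (Finset.mem_filter.mp h).2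
    have hbge : ‖p‖ * r ≤ b := Finset.le_max' _ _ (Finset.mem_insert_self _ _)
    have hbpos : 0 < b := lt_of_lt_of_le hpr hbge
    set ρ : ℝ := (b + r)/2 with hρdef
    have hρb : b < ρ := by rw [hρdef]; linarith
    have hρr : ρ < r := by rw [hρdef]; linarith
    have hρpos : 0 < ρ := lt_trans hbpos hρb
    -- no zero has modulus in [ρ, r)
    have hgap : ∀ z : ℂ, f z = 0 → ρ ≤ ‖z‖ → ‖z‖ < r → False := by
      intro z hz0 hz1 hz2
      have hmem : z ∈ (hfin (‖p‖*r) r hpr).toFinset := by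
        rw [Set.Finite.mem_toFinset]
        exact ⟨by nlinarith, hz2.le, hz0⟩
      have hTmem : ‖z‖ ∈ T := by
        rw [hT, Finset.mem_filter]
        exact ⟨Finset.mem_image_of_mem _ hmem, hz2⟩
      have : ‖z‖ ≤ b := Finset.le_max' _ _ (Finset.mem_insert_of_mem hTmem)
      linarith
    set ρ2 : ℝ := ρ / ‖p‖ with hρ2def
    have hρ2pos : 0 < ρ2 := by positivity
    have hρρ2 : ‖p‖ * ρ2 = ρ := by
      rw [hρ2def, mul_comm]
      exact div_mul_cancel₀ ρ (ne_of_gt hp0)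
    have hρleρ2 : ρ ≤ ρ2 := by
      rw [hρ2def, le_div_iff₀ hp0]; nlinarith
    have hcρ : ∀ w : ℂ, ‖w‖ = ρ → f w ≠ 0 := by
      intro w hw hfw
      exact hgap w hfw hw.ge (hw ▸ hρr)
    have hcρ2 : ∀ w : ℂ, ‖w‖ = ρ2 → f w ≠ 0 := by
      intro w hw hfw
      have hw0 : w ≠ 0 := by
        intro h0; rw [h0, norm_zero] at hw; linarith
      have hpw : f (p * w) = 0 := by
        rw [hfunc w hw0, hfw, mul_zero]
      have hpwn : ‖p * w‖ = ρ := by rw [norm_mul, hw, hρρ2]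
      exact hcρ (p*w) hpwn hpw
    set s : Finset ℂ := (hfin ρ ρ2 hρpos).toFinset with hsdef
    have hsmem : ∀ z : ℂ, z ∈ s ↔ (ρ ≤ ‖z‖ ∧ ‖z‖ ≤ ρ2 ∧ f z = 0) := by
      intro z; rw [hsdef, Set.Finite.mem_toFinset]; rfl
    -- membership translation
    have hmemiff : ∀ z : ℂ, z ∈ s ↔ (r ≤ ‖z‖ ∧ ‖z‖ < r / ‖p‖ ∧ f z = 0) := by
      intro z
      rw [hsmem z]
      constructor
      · rintro ⟨h1, h2, h0⟩
        have hz0 : z ≠ 0 := by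
          intro h; rw [h, norm_zero] at h1; linarith
        refine ⟨?_, ?_, h0⟩
        · by_contra hlt
          exact hgap z h0 h1 (lt_of_not_ge hlt)
        · rw [lt_div_iff₀ hp0]
          calc ‖z‖ * ‖p‖ = ‖p‖ * ‖z‖ := mul_comm _ _
            _ ≤ ‖p‖ * ρ2 := by nlinarith
            _ = ρ := hρρ2
            _ < r := hρr
      · rintro ⟨h1, h2, h0⟩
        have hz0 : z ≠ 0 := by
          intro h; rw [h, norm_zero] at h1; linarith
        refine ⟨by linarith, ?_, h0⟩
        by_contra hgt
        push_neg at hgt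
        have hpz : f (p * z) = 0 := by rw [hfunc z hz0, h0, mul_zero]
        have hpzn1 : ρ ≤ ‖p * z‖ := by
          rw [norm_mul]
          calc ρ = ‖p‖ * ρ2 := hρρ2.symm
            _ ≤ ‖p‖ * ‖z‖ := by nlinarith
        have hpzn2 : ‖p * z‖ < r := by
          rw [norm_mul]
          calc ‖p‖ * ‖z‖ < ‖p‖ * (r / ‖p‖) := by nlinarith
            _ = r := by
              rw [mul_comm]
              exact div_mul_cancel₀ r (ne_of_gt hp0)
        exact absurd (hgap (p*z) hpz hpzn1 hpzn2) (fun h => h)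
    -- residue count
    have hres := residue_count hρpos hρleρ2
      (fun z hz1 _ => hfa z (fun h => by rw [h, norm_zero] at hz1; linarith))
      s m (fun z => hsmem z)
      (fun z hz => hordfin z (fun h => by
        have := ((hsmem z).1 hz).1
        rw [h, norm_zero] at this; linarith))
      (fun z hz => by
        rcases hz with h | h
        · exact hcρ z h
        · exact hcρ2 z h)
    have hfunc_int := func_int hp' hC hfa hfunc hρ2pos hcρ2
    rw [hρρ2] at hfunc_int
    have h2πI : (2 * (Real.pi:ℂ) * I) ≠ 0 := by
      simp [Real.pi_ne_zero, Complex.I_ne_zero]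
    have hkey : (2 * (Real.pi:ℂ) * I) * k = (2 * (Real.pi:ℂ) * I) * ∑ z ∈ s, (m z : ℂ) := by
      rw [← hres, ← hfunc_int]
    exact ⟨s, hmemiff, mul_left_cancel₀ h2πI hkey⟩
  -- conclusions
  have hknat : ∃ N : ℕ, k = (N : ℤ) := by
    obtain ⟨s, -, hsum⟩ := core 1 one_pos
    refine ⟨∑ z ∈ s, m z, ?_⟩
    have : (k:ℂ) = ((∑ z ∈ s, m z : ℕ) : ℂ) := by rw [hsum]; push_cast; ring
    exact_mod_cast this
  obtain ⟨N, hN⟩ := hknat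
  refine ⟨by omega, ?_, ?_⟩
  · intro hk z hz hfz
    obtain ⟨s, hmem, hsum⟩ := core ‖z‖ (norm_pos_iff.2 hz)
    have hzs : z ∈ s := by
      rw [hmem z]
      refine ⟨le_refl _, ?_, hfz⟩
      rw [lt_div_iff₀ hp0]
      nlinarith [norm_pos_iff.2 hz]
    have hsum0 : ∑ w ∈ s, m w = 0 := by
      have : ((∑ w ∈ s, m w : ℕ) : ℂ) = 0 := by
        push_cast
        rw [← hsum, hk]
        norm_num
      exact_mod_cast this
    have := Finset.sum_eq_zero_iff.mp hsum0 z hzs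
    have h1 := hmpos z hz hfz
    omega
  · intro r hr
    obtain ⟨s, hmem, hsum⟩ := core r hr
    refine ⟨s, hmem, ?_⟩
    have hdite : ∀ z ∈ s, (if h : z ≠ 0 then ((analyticOrderAt f z).toNat) else 0) = m z := by
      intro z hz
      simp only [hm]
    rw [Finset.sum_congr rfl hdite]
    have hsN : ((∑ z ∈ s, m z : ℕ) : ℂ) = (N : ℂ) := by
      push_cast
      rw [← hsum, hN]
      push_cast
      ring
    have : ∑ z ∈ s, m z = N := by exact_mod_cast hsN
    rw [this, hN]
    exact Int.toNat_natCast N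
end

section
/- (Hilbert 90 specialization) Let L/K be a quadratic field extension with nontrivial K-automorphism x ↦ x̄ of L, and let A ∈ GL_n(L) satisfy Ā·A = I, where Ā denotes entrywise conjugation. Then there exists B ∈ GL_n(L) with A = B̄·B^{−1}. -/
theorem hilbert90_matrices (K L : Type*) [Field K] [Field L] [Algebra K L]
    [IsGalois K L] (hrank : Module.finrank K L = 2)
    (σ : L ≃ₐ[K] L) (hσ : σ ≠ AlgEquiv.refl)
    (n : ℕ) (A : Matrix (Fin n) (Fin n) L) (hA : IsUnit A)
    (hAA : A.map σ * A = 1) :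
    ∃ B : Matrix (Fin n) (Fin n) L, ∃ Binv : Matrix (Fin n) (Fin n) L,
      B * Binv = 1 ∧ Binv * B = 1 ∧ A = B.map σ * Binv := by
  classical
  -- finite dimensional
  have hfd : FiniteDimensional K L := Module.finite_of_finrank_pos (by omega)
  -- σ is an involution
  have hcard : Fintype.card (L ≃ₐ[K] L) = 2 := by
    rw [← Nat.card_eq_fintype_card, IsGalois.card_aut_eq_finrank, hrank]
  have hσ2 : ∀ x : L, σ (σ x) = x := by
    have h1 : σ ^ Fintype.card (L ≃ₐ[K] L) = 1 := pow_card_eq_one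
    rw [hcard, pow_two] at h1
    intro x
    have := congrArg (fun f : L ≃ₐ[K] L => f x) h1
    simpa [AlgEquiv.mul_apply] using this
  -- A * (A.map σ) = 1
  have hAA' : A * A.map σ = 1 := mul_eq_one_comm.mpr hAA
  set M := A.map σ with hM
  -- semilinear involution T
  set T : (Fin n → L) → (Fin n → L) := fun x => M.mulVec (fun i => σ (x i)) with hT
  have hMσ : M.map σ = A := by
    ext i j
    simp [hM, Matrix.map_apply, hσ2]
  have hTT : ∀ x, T (T x) = x := by
    intro x
    have h1 : (fun i => σ (T x i)) = (M.map σ).mulVec (fun i => σ (σ (x i))) := by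
      funext i
      simp [hT, Matrix.mulVec, dotProduct, map_sum, Matrix.map_apply]
    simp only [hT, h1, hMσ]
    rw [show (fun i => σ (M.mulVec (fun i => σ (x i)) i)) = (M.map σ).mulVec (fun i => σ (σ (x i))) from h1,
      hMσ, Matrix.mulVec_mulVec, hAA]
    simp [hσ2]
  have hTadd : ∀ x y, T (x + y) = T x + T y := by
    intro x y
    have : (fun i => σ ((x + y) i)) = (fun i => σ (x i)) + (fun i => σ (y i)) := by
      funext i; simp [map_add]
    funext i
    simp [hT, Matrix.mulVec, dotProduct, mul_add, Finset.sum_add_distrib]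
  have hTsmul : ∀ (a : L) x, T (a • x) = σ a • T x := by
    intro a x
    have : (fun i => σ ((a • x) i)) = σ a • (fun i => σ (x i)) := by
      funext i; simp [map_mul, Algebra.smul_def]
    funext i
    simp only [hT, Matrix.mulVec, dotProduct, Pi.smul_apply, smul_eq_mul,
      Finset.mul_sum]
    exact Finset.sum_congr rfl fun k _ => by rw [map_mul]; ring
  -- fixed set of T spans everything over L
  set V : Set (Fin n → L) := {x | T x = x} with hV
  obtain ⟨a, ha⟩ : ∃ a : L, σ a ≠ a := by
    by_contra h
    push_neg at h
    exact hσ (AlgEquiv.ext h)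
  have hspan : ⊤ ≤ Submodule.span L V := by
    intro x _
    have hv1 : x + T x ∈ V := by
      simp only [hV, Set.mem_setOf_eq, hTadd, hTT]
      abel
    have hv2 : a • x + σ a • T x ∈ V := by
      simp only [hV, Set.mem_setOf_eq, hTadd, hTsmul, hTT, hσ2]
      abel
    have hx : x = (σ a - a)⁻¹ • (σ a • (x + T x) - (a • x + σ a • T x)) := by
      have h2 : σ a • (x + T x) - (a • x + σ a • T x) = (σ a - a) • x := by module
      rw [h2, smul_smul, inv_mul_cancel₀ (sub_ne_zero.mpr ha), one_smul]
    rw [hx]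
    exact Submodule.smul_mem _ _ (Submodule.sub_mem _
      (Submodule.smul_mem _ _ (Submodule.subset_span hv1))
      (Submodule.subset_span hv2))
  -- a basis contained in V
  let b := Module.Basis.ofSpan hspan
  have hbV : ∀ i, (b i : Fin n → L) ∈ V := fun i =>
    Module.Basis.ofSpan_subset hspan ⟨i, rfl⟩
  haveI : Fintype ((linearIndepOn_empty L id).extend (Set.empty_subset V)) :=
    FiniteDimensional.fintypeBasisIndex b
  have hcardb : Fintype.card
      ((linearIndepOn_empty L id).extend (Set.empty_subset V)) = n := by
    have := Module.finrank_eq_card_basis b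
    rw [Module.finrank_fin_fun] at this
    omega
  let e := Fintype.equivFinOfCardEq hcardb
  let c : Module.Basis (Fin n) L (Fin n → L) := b.reindex e
  have hcV : ∀ j, (c j : Fin n → L) ∈ V := fun j => by
    simpa [c, Module.Basis.reindex_apply] using hbV (e.symm j)
  -- the matrix B
  let B : Matrix (Fin n) (Fin n) L := (Pi.basisFun L (Fin n)).toMatrix c
  haveI : Invertible B := (Pi.basisFun L (Fin n)).invertibleToMatrix c
  have hBij : ∀ i j, B i j = c j i := by
    intro i j
    simp [B, Module.Basis.toMatrix_apply]
  -- key identity: A * B = B.map σ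
  have hkey : A * B = B.map σ := by
    ext i j
    have hc : T (c j) = c j := hcV j
    have : A.mulVec (c j) = fun i => σ (c j i) := by
      conv_lhs => rw [← hc]
      simp only [hT, Matrix.mulVec_mulVec, hAA']
      simp
    calc (A * B) i j = A.mulVec (fun k => c j k) i := by
          simp [Matrix.mul_apply, Matrix.mulVec, dotProduct, hBij]
      _ = σ (c j i) := by rw [show (fun k => c j k) = c j from rfl, this]
      _ = (B.map σ) i j := by simp [Matrix.map_apply, hBij]
  refine ⟨B, ⅟B, mul_invOf_self B, invOf_mul_self B, ?_⟩
  calc A = A * (B * ⅟B) := by rw [mul_invOf_self, mul_one]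
    _ = (A * B) * ⅟B := by rw [mul_assoc]
    _ = B.map σ * ⅟B := by rw [hkey]
end

section
/- Let C(z) be a 2×2 matrix of elliptic functions (meromorphic on ℂ* with C(pz)=C(z)), holomorphic except for at most simple poles at three points a, b, c (mod p^ℤ), such that the residue matrix at a has both image and kernel spanned by (1,1), at b by (0,1), and at c by (1,0). Then C is constant. If moreover C preserves the three lines span(1,1), span(0,1), span(1,0), then C is a scalar multiple of the identity. -/
open Filter Topology Set Metric

lemma finite_zpow_band {q A r1 r2 : ℝ} (hq0 : 0 < q) (hq1 : q < 1) (hA : 0 < A) (hr1 : 0 < r1) :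
    {n : ℤ | r1 ≤ q ^ n * A ∧ q ^ n * A ≤ r2}.Finite := by
  obtain ⟨m, hm⟩ := exists_pow_lt_of_lt_one (div_pos hr1 hA) hq1
  obtain ⟨k, hk⟩ := pow_unbounded_of_one_lt (r2 / A) ((one_lt_inv₀ hq0).2 hq1)
  apply Set.Finite.subset (Set.finite_Ioo (-(k : ℤ)) (m : ℤ))
  rintro n ⟨h1, h2⟩
  constructor
  · have h3 : (q : ℝ) ^ n ≤ r2 / A := (le_div_iff₀ hA).2 h2
    have h4 : (q : ℝ) ^ n < q ^ (-(k : ℤ)) := by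
      refine h3.trans_lt ?_
      rw [zpow_neg, ← inv_zpow, zpow_natCast]
      exact hk
    have := (zpow_lt_zpow_iff_right_of_lt_one₀ hq0 hq1).1 h4
    omega
  · have h3 : r1 / A ≤ q ^ n := (div_le_iff₀ hA).2 h1
    have h4 : (q : ℝ) ^ (m : ℤ) < q ^ n := by
      refine lt_of_lt_of_le ?_ h3
      rw [zpow_natCast]; exact hm
    have := (zpow_lt_zpow_iff_right_of_lt_one₀ hq0 hq1).1 h4
    omega

lemma eventually_good (p x y₁ y₂ : ℂ) (hp0 : 0 < ‖p‖) (hp1 : ‖p‖ < 1)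
    (hx : x ≠ 0) (hy₁ : y₁ ≠ 0) (hy₂ : y₂ ≠ 0) {z : ℂ} (hz : z ≠ 0) :
    ∀ᶠ w in 𝓝[≠] z, w ≠ 0 ∧ ∀ n : ℤ, w ≠ p ^ n * x ∧ w ≠ p ^ n * y₁ ∧ w ≠ p ^ n * y₂ := by
  have hz0 : 0 < ‖z‖ := norm_pos_iff.2 hz
  set r1 := ‖z‖ / 2 with hr1def
  set r2 := 2 * ‖z‖ with hr2def
  have hr1 : 0 < r1 := by positivity
  have key : ∀ ξ : ℂ, ξ ≠ 0 →
      ({w : ℂ | (∃ n : ℤ, w = p ^ n * ξ) ∧ r1 ≤ ‖w‖ ∧ ‖w‖ ≤ r2}).Finite := by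
    intro ξ hξ
    have hfin := finite_zpow_band (q := ‖p‖) (A := ‖ξ‖) (r1 := r1) (r2 := r2) hp0 hp1
      (norm_pos_iff.2 hξ) hr1
    refine (hfin.image (fun n : ℤ => p ^ n * ξ)).subset ?_
    rintro w ⟨⟨n, rfl⟩, hw1, hw2⟩
    exact ⟨n, by simpa [norm_mul, norm_zpow] using And.intro hw1 hw2, rfl⟩
  set F : Set ℂ := {w : ℂ | (∃ n : ℤ, w = p ^ n * x ∨ w = p ^ n * y₁ ∨ w = p ^ n * y₂)
      ∧ r1 ≤ ‖w‖ ∧ ‖w‖ ≤ r2} with hFdef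
  have hF : F.Finite := by
    have : F ⊆ {w : ℂ | (∃ n : ℤ, w = p ^ n * x) ∧ r1 ≤ ‖w‖ ∧ ‖w‖ ≤ r2} ∪
        ({w : ℂ | (∃ n : ℤ, w = p ^ n * y₁) ∧ r1 ≤ ‖w‖ ∧ ‖w‖ ≤ r2} ∪
         {w : ℂ | (∃ n : ℤ, w = p ^ n * y₂) ∧ r1 ≤ ‖w‖ ∧ ‖w‖ ≤ r2}) := by
      rintro w ⟨⟨n, h | h | h⟩, hw⟩
      · exact Or.inl ⟨⟨n, h⟩, hw⟩
      · exact Or.inr (Or.inl ⟨⟨n, h⟩, hw⟩)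
      · exact Or.inr (Or.inr ⟨⟨n, h⟩, hw⟩)
    exact (((key x hx).union ((key y₁ hy₁).union (key y₂ hy₂))).subset this)
  have hU : (ball z r1 \ (F \ {z})) ∈ 𝓝 z := by
    refine (isOpen_ball.sdiff ((hF.subset diff_subset).isClosed)).mem_nhds ?_
    exact ⟨mem_ball_self hr1, fun h => h.2 rfl⟩
  filter_upwards [mem_nhdsWithin_of_mem_nhds hU, self_mem_nhdsWithin] with w hw hwz
  have hdist : ‖w - z‖ < r1 := by
    have := hw.1; rwa [mem_ball, dist_eq_norm] at this
  have hlow : r1 ≤ ‖w‖ := by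
    have h1 : ‖z‖ - ‖w‖ ≤ ‖w - z‖ := by
      have := abs_norm_sub_norm_le w z
      rw [abs_sub_le_iff] at this
      linarith [this.2]
    rw [hr1def] at *; linarith
  have hhigh : ‖w‖ ≤ r2 := by
    have h1 : ‖w‖ - ‖z‖ ≤ ‖w - z‖ := by
      have := abs_norm_sub_norm_le w z
      rw [abs_sub_le_iff] at this
      linarith [this.1]
    rw [hr1def] at hdist; rw [hr2def]; linarith
  have hw0 : w ≠ 0 := by
    intro h; rw [h] at hlow; simp at hlow; linarith
  refine ⟨hw0, fun n => ⟨?_, ?_, ?_⟩⟩ <;>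
  · intro h
    exact hw.2 ⟨⟨⟨n, by tauto⟩, hlow, hhigh⟩, hwz⟩

lemma per_zpow {p : ℂ} (hp : p ≠ 0) {f : ℂ → ℂ} (hper : ∀ z : ℂ, z ≠ 0 → f (p * z) = f z) :
    ∀ (n : ℤ) (z : ℂ), z ≠ 0 → f (p ^ n * z) = f z := by
  have hinv : ∀ z : ℂ, z ≠ 0 → f (p⁻¹ * z) = f z := by
    intro z hz
    have h := hper (p⁻¹ * z) (mul_ne_zero (inv_ne_zero hp) hz)
    rw [← mul_assoc, mul_inv_cancel₀ hp, one_mul] at h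
    exact h.symm
  intro n
  induction n using Int.induction_on with
  | zero => simp
  | succ n ih =>
      intro z hz
      rw [show (p : ℂ) ^ ((n : ℤ) + 1) * z = p * (p ^ (n : ℤ) * z) by
        rw [zpow_add_one₀ hp]; ring]
      rw [hper _ (mul_ne_zero (zpow_ne_zero _ hp) hz), ih z hz]
  | pred n ih =>
      intro z hz
      rw [show (p : ℂ) ^ (-(n : ℤ) - 1) * z = p⁻¹ * (p ^ (-(n : ℤ)) * z) by
        rw [show (-(n:ℤ) - 1) = (-(n:ℤ)) + (-1) by ring, zpow_add₀ hp, zpow_neg_one]; ring]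
      rw [hinv _ (mul_ne_zero (zpow_ne_zero _ hp) hz), ih z hz]

lemma tendsto_punctured_mul {q : ℂ} (hq : q ≠ 0) (y : ℂ) :
    Tendsto (fun z => q * z) (𝓝[≠] y) (𝓝[≠] (q * y)) := by
  refine tendsto_nhdsWithin_of_tendsto_nhds_of_eventually_within _
    (((continuous_const.mul continuous_id).tendsto y).mono_left nhdsWithin_le_nhds) ?_
  filter_upwards [self_mem_nhdsWithin] with z hz
  simp only [mem_compl_iff, mem_singleton_iff] at hz ⊢
  exact fun h => hz (mul_left_cancel₀ hq h)

lemma transfer_tendsto {p y : ℂ} (hp : p ≠ 0) (hy : y ≠ 0) {f : ℂ → ℂ}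
    (hper : ∀ z : ℂ, z ≠ 0 → f (p * z) = f z) (n : ℤ) {ρ : ℂ}
    (h : Tendsto (fun z => (z - y) * f z) (𝓝[≠] y) (𝓝 ρ)) :
    Tendsto (fun z => (z - p ^ n * y) * f z) (𝓝[≠] (p ^ n * y)) (𝓝 (p ^ n * ρ)) := by
  have hpn : (p : ℂ) ^ n ≠ 0 := zpow_ne_zero _ hp
  have hmap : Tendsto (fun z : ℂ => (p ^ n)⁻¹ * z) (𝓝[≠] (p ^ n * y)) (𝓝[≠] y) := by
    have := tendsto_punctured_mul (inv_ne_zero hpn) (p ^ n * y)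
    rwa [← mul_assoc, inv_mul_cancel₀ hpn, one_mul] at this
  have h2 := (h.comp hmap).const_mul ((p : ℂ) ^ n)
  refine h2.congr' ?_
  have h0 : {z : ℂ | z ≠ 0} ∈ 𝓝[≠] (p ^ n * y) :=
    mem_nhdsWithin_of_mem_nhds (compl_singleton_mem_nhds (mul_ne_zero hpn hy))
  filter_upwards [h0] with z hz
  have hfz : f ((p ^ n)⁻¹ * z) = f z := by
    have h3 := per_zpow hp hper n ((p ^ n)⁻¹ * z) (mul_ne_zero (inv_ne_zero hpn) hz)
    rw [← mul_assoc, mul_inv_cancel₀ hpn, one_mul] at h3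
    exact h3.symm
  simp only [Function.comp]
  rw [hfz]
  field_simp

lemma transfer_tendsto' {p y : ℂ} (hp : p ≠ 0) (hy : y ≠ 0) {f : ℂ → ℂ}
    (hper : ∀ z : ℂ, z ≠ 0 → f (p * z) = f z) (n : ℤ) {L : ℂ}
    (h : Tendsto f (𝓝[≠] y) (𝓝 L)) :
    Tendsto f (𝓝[≠] (p ^ n * y)) (𝓝 L) := by
  have hpn : (p : ℂ) ^ n ≠ 0 := zpow_ne_zero _ hp
  have hmap : Tendsto (fun z : ℂ => (p ^ n)⁻¹ * z) (𝓝[≠] (p ^ n * y)) (𝓝[≠] y) := by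
    have := tendsto_punctured_mul (inv_ne_zero hpn) (p ^ n * y)
    rwa [← mul_assoc, inv_mul_cancel₀ hpn, one_mul] at this
  refine (h.comp hmap).congr' ?_
  have h0 : {z : ℂ | z ≠ 0} ∈ 𝓝[≠] (p ^ n * y) :=
    mem_nhdsWithin_of_mem_nhds (compl_singleton_mem_nhds (mul_ne_zero hpn hy))
  filter_upwards [h0] with z hz
  simp only [Function.comp]
  have h3 := per_zpow hp hper n ((p ^ n)⁻¹ * z) (mul_ne_zero (inv_ne_zero hpn) hz)
  rw [← mul_assoc, mul_inv_cancel₀ hpn, one_mul] at h3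
  exact h3.symm

lemma regularize (p x y₁ y₂ : ℂ) (hp0 : 0 < ‖p‖) (hp1 : ‖p‖ < 1)
    (hx : x ≠ 0) (hy₁ : y₁ ≠ 0) (hy₂ : y₂ ≠ 0) (f : ℂ → ℂ)
    (hper : ∀ z : ℂ, z ≠ 0 → f (p * z) = f z)
    (hdiff : ∀ z : ℂ, z ≠ 0 → (∀ n : ℤ, z ≠ p ^ n * x ∧ z ≠ p ^ n * y₁ ∧ z ≠ p ^ n * y₂) →
      DifferentiableAt ℂ f z)
    (ρ : ℂ) (hρ : Tendsto (fun z => (z - x) * f z) (𝓝[≠] x) (𝓝 ρ))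
    (h1 : Tendsto (fun z => (z - y₁) * f z) (𝓝[≠] y₁) (𝓝 0))
    (h2 : Tendsto (fun z => (z - y₂) * f z) (𝓝[≠] y₂) (𝓝 0)) :
    ∃ G : ℂ → ℂ,
      (∀ z : ℂ, z ≠ 0 → (∀ n : ℤ, z ≠ p ^ n * x ∧ z ≠ p ^ n * y₁ ∧ z ≠ p ^ n * y₂) → G z = f z) ∧
      (∀ z : ℂ, z ≠ 0 → (ρ = 0 ∨ ∀ n : ℤ, z ≠ p ^ n * x) → DifferentiableAt ℂ G z) ∧
      (∀ z : ℂ, z ≠ 0 → (ρ = 0 ∨ ∀ n : ℤ, z ≠ p ^ n * x) → G (p * z) = G z) ∧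
      Tendsto (fun z => (z - x) * G z) (𝓝[≠] x) (𝓝 ρ) := by
  have hp : p ≠ 0 := by intro h; rw [h] at hp0; simp at hp0
  classical
  set G : ℂ → ℂ := fun z => limUnder (𝓝[≠] z) f with hGdef
  set Good : ℂ → Prop :=
    fun z => z ≠ 0 ∧ ∀ n : ℤ, z ≠ p ^ n * x ∧ z ≠ p ^ n * y₁ ∧ z ≠ p ^ n * y₂ with hGooddef
  have hGf : ∀ z, Good z → G z = f z := by
    intro z hz
    exact Tendsto.limUnder_eq ((hdiff z hz.1 hz.2).continuousAt.continuousWithinAt)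
  have hev : ∀ z : ℂ, z ≠ 0 → ∀ᶠ w in 𝓝[≠] z, Good w := fun z hz =>
    eventually_good p x y₁ y₂ hp0 hp1 hx hy₁ hy₂ hz
  have hGfnhds : ∀ z, Good z → G =ᶠ[𝓝 z] f := by
    intro z hz
    have h' := hev z hz.1
    rw [eventually_nhdsWithin_iff] at h'
    filter_upwards [h'] with w hw
    rcases eq_or_ne w z with rfl | hne
    · exact hGf _ hz
    · exact hGf _ (hw hne)
  have hGdiffgood : ∀ z, Good z → DifferentiableAt ℂ G z := fun z hz =>
    (hdiff z hz.1 hz.2).congr_of_eventuallyEq (hGfnhds z hz)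
  have hrem : ∀ w : ℂ, w ≠ 0 → Tendsto (fun z => (z - w) * f z) (𝓝[≠] w) (𝓝 0) →
      DifferentiableAt ℂ G w ∧ Tendsto f (𝓝[≠] w) (𝓝 (G w)) := by
    intro w hw hT
    have hd : ∀ᶠ z in 𝓝[≠] w, DifferentiableAt ℂ f z := by
      filter_upwards [hev w hw] with u hu
      exact hdiff u hu.1 hu.2
    have ho : (fun z => f z - f w) =o[𝓝[≠] w] fun z => (z - w)⁻¹ := by
      rw [Asymptotics.isLittleO_iff_tendsto']
      · have hsub : Tendsto (fun z : ℂ => z - w) (𝓝[≠] w) (𝓝 0) := by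
          have : Tendsto (fun z : ℂ => z - w) (𝓝 w) (𝓝 (w - w)) :=
            (continuous_id.sub continuous_const).tendsto w
          rw [sub_self] at this
          exact this.mono_left nhdsWithin_le_nhds
        have hT2 : Tendsto (fun z => (z - w) * f z - (z - w) * f w) (𝓝[≠] w) (𝓝 0) := by
          have := hT.sub (hsub.mul_const (f w))
          simpa using this
        refine hT2.congr' ?_
        filter_upwards [self_mem_nhdsWithin] with z hz
        have hzw : (z : ℂ) - w ≠ 0 := sub_ne_zero.2 hz
        field_simp
      · filter_upwards [self_mem_nhdsWithin] with z hz h0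
        exact absurd (inv_eq_zero.1 h0) (sub_ne_zero.2 hz)
    have hlim : Tendsto f (𝓝[≠] w) (𝓝 (G w)) :=
      Complex.tendsto_limUnder_of_differentiable_on_punctured_nhds_of_isLittleO hd ho
    have hGw : ∀ᶠ z in 𝓝[≠] w, G z = f z := (hev w hw).mono fun u hu => hGf u hu
    have hcont : ContinuousAt G w := by
      rw [← continuousWithinAt_compl_self]
      exact hlim.congr' (by filter_upwards [hGw] with u hu using hu.symm)
    have hanG : AnalyticAt ℂ G w := by
      refine Complex.analyticAt_of_differentiable_on_punctured_nhds_of_continuousAt ?_ hcont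
      filter_upwards [hev w hw] with u hu
      exact hGdiffgood u hu
    exact ⟨hanG.differentiableAt, hlim⟩
  have hreg : ∀ z : ℂ, z ≠ 0 → (ρ = 0 ∨ ∀ n : ℤ, z ≠ p ^ n * x) →
      DifferentiableAt ℂ G z ∧ Tendsto f (𝓝[≠] z) (𝓝 (G z)) := by
    intro z hz hcase
    by_cases hgood : Good z
    · refine ⟨hGdiffgood z hgood, ?_⟩
      rw [hGf z hgood]
      exact (hdiff z hgood.1 hgood.2).continuousAt.continuousWithinAt
    · have hz' : ∃ n : ℤ, z = p ^ n * x ∨ z = p ^ n * y₁ ∨ z = p ^ n * y₂ := by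
        by_contra hcon
        push_neg at hcon
        exact hgood ⟨hz, fun n => hcon n⟩
      obtain ⟨n, hcase3⟩ := hz'
      rcases hcase3 with h | h | h
      · subst h
        rcases hcase with h0 | h' 
        · refine hrem _ hz ?_
          have := transfer_tendsto hp hx hper n hρ
          rw [h0] at this
          simpa using this
        · exact absurd rfl (h' n)
      · subst h
        refine hrem _ hz ?_
        have := transfer_tendsto hp hy₁ hper n h1
        simpa using this
      · subst h
        refine hrem _ hz ?_
        have := transfer_tendsto hp hy₂ hper n h2
        simpa using this
  have hperG : ∀ z : ℂ, z ≠ 0 → (ρ = 0 ∨ ∀ n : ℤ, z ≠ p ^ n * x) → G (p * z) = G z := by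
    intro z hz hcase
    have hpz : p * z ≠ 0 := mul_ne_zero hp hz
    have hcase' : ρ = 0 ∨ ∀ n : ℤ, p * z ≠ p ^ n * x := by
      rcases hcase with h | h
      · exact Or.inl h
      · refine Or.inr fun n hn => h (n - 1) ?_
        have hzeq : z = p⁻¹ * (p ^ n * x) := by
          rw [← hn, ← mul_assoc, inv_mul_cancel₀ hp, one_mul]
        rw [hzeq, zpow_sub_one₀ hp]
        ring
    obtain ⟨-, hlim⟩ := hreg (p * z) hpz hcase'
    have hmapz : Tendsto (fun w : ℂ => p * w) (𝓝[≠] z) (𝓝[≠] (p * z)) :=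
      tendsto_punctured_mul hp z
    have hto : Tendsto f (𝓝[≠] z) (𝓝 (G (p * z))) := by
      refine (hlim.comp hmapz).congr' ?_
      have h0 : {w : ℂ | w ≠ 0} ∈ 𝓝[≠] z :=
        mem_nhdsWithin_of_mem_nhds (compl_singleton_mem_nhds hz)
      filter_upwards [h0] with w hw
      exact hper w hw
    exact hto.limUnder_eq.symm
  refine ⟨G, fun z hz hgood => hGf z ⟨hz, hgood⟩, fun z hz hc => (hreg z hz hc).1, hperG, ?_⟩
  refine hρ.congr' ?_
  filter_upwards [hev x hx] with u hu
  rw [hGf u hu]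

lemma circleIntegral_rot (p : ℂ) (hp : p ≠ 0) {r : ℝ} (hr : 0 ≤ r) (g : ℂ → ℂ)
    (hg : ∀ w : ℂ, ‖w‖ = r → p * g (p * w) = g w) :
    (∮ z in C(0, ‖p‖ * r), g z) = ∮ z in C(0, r), g z := by
  have hid : ∀ s : ℝ, p * circleMap 0 r s = circleMap 0 (‖p‖ * r) (s + Complex.arg p) := by
    intro s
    simp only [circleMap_zero]
    rw [show ((s + Complex.arg p : ℝ) : ℂ) * Complex.I
        = (Complex.arg p : ℂ) * Complex.I + (s : ℂ) * Complex.I by push_cast; ring,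
      Complex.exp_add]
    rw [show ((‖p‖ * r : ℝ) : ℂ) = (‖p‖ : ℝ) * (r : ℝ) by push_cast; ring]
    rw [show ((‖p‖ : ℝ) : ℂ) * ((r : ℝ) : ℂ) * (Complex.exp ((Complex.arg p : ℂ) * Complex.I) *
        Complex.exp ((s : ℂ) * Complex.I))
        = (((‖p‖ : ℝ) : ℂ) * Complex.exp ((Complex.arg p : ℂ) * Complex.I)) *
          ((r : ℝ) * Complex.exp ((s : ℂ) * Complex.I)) by ring]
    rw [show (((‖p‖ : ℝ) : ℂ) * Complex.exp ((Complex.arg p : ℂ) * Complex.I)) = p by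
      simpa using Complex.norm_mul_exp_arg_mul_I p]
  set F : ℝ → ℂ := fun s => circleMap 0 r s * Complex.I * g (circleMap 0 r s) with hF
  have hFper : Function.Periodic F (2 * Real.pi) := by
    intro s
    simp only [hF, periodic_circleMap 0 r s]
  have key : ∀ θ : ℝ, deriv (circleMap 0 (‖p‖ * r)) θ • g (circleMap 0 (‖p‖ * r) θ)
      = F (θ - Complex.arg p) := by
    intro θ
    rw [deriv_circleMap, smul_eq_mul]
    have h1 : circleMap 0 (‖p‖ * r) θ = p * circleMap 0 r (θ - Complex.arg p) := by
      rw [hid (θ - Complex.arg p), sub_add_cancel]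
    have hw : ‖circleMap 0 r (θ - Complex.arg p)‖ = r := by
      simp [norm_circleMap_zero, _root_.abs_of_nonneg hr]
    have h2 := hg _ hw
    rw [h1]
    simp only [hF]
    rw [← h2]
    ring
  have key2 : ∀ θ : ℝ, deriv (circleMap 0 r) θ • g (circleMap 0 r θ) = F θ := by
    intro θ
    rw [deriv_circleMap, smul_eq_mul]
  calc (∮ z in C(0, ‖p‖ * r), g z)
      = ∫ θ in (0:ℝ)..(2 * Real.pi), F (θ - Complex.arg p) := by
        rw [circleIntegral]
        exact intervalIntegral.integral_congr fun θ _ => key θ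
    _ = ∫ θ in (0:ℝ) - Complex.arg p..(2 * Real.pi) - Complex.arg p, F θ := by
        rw [intervalIntegral.integral_comp_sub_right]
    _ = ∫ θ in (0:ℝ)..(2 * Real.pi), F θ := by
        have := hFper.intervalIntegral_add_eq ((0:ℝ) - Complex.arg p) 0
        simpa [sub_eq_add_neg, add_comm, add_left_comm, add_assoc, zero_add] using this
    _ = ∮ z in C(0, r), g z := by
        rw [circleIntegral]
        exact (intervalIntegral.integral_congr fun θ _ => key2 θ).symm

lemma residue_vanish (p x y₁ y₂ : ℂ) (hp0 : 0 < ‖p‖) (hp1 : ‖p‖ < 1)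
    (hx : x ≠ 0) (hy₁ : y₁ ≠ 0) (hy₂ : y₂ ≠ 0) (f : ℂ → ℂ)
    (hper : ∀ z : ℂ, z ≠ 0 → f (p * z) = f z)
    (hdiff : ∀ z : ℂ, z ≠ 0 → (∀ n : ℤ, z ≠ p ^ n * x ∧ z ≠ p ^ n * y₁ ∧ z ≠ p ^ n * y₂) →
      DifferentiableAt ℂ f z)
    (ρ : ℂ) (hρ : Tendsto (fun z => (z - x) * f z) (𝓝[≠] x) (𝓝 ρ))
    (h1 : Tendsto (fun z => (z - y₁) * f z) (𝓝[≠] y₁) (𝓝 0))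
    (h2 : Tendsto (fun z => (z - y₂) * f z) (𝓝[≠] y₂) (𝓝 0)) : ρ = 0 := by
  classical
  have hp : p ≠ 0 := by intro h; rw [h] at hp0; simp at hp0
  obtain ⟨G, hGf, hGdiff, hGper, hGres⟩ :=
    regularize p x y₁ y₂ hp0 hp1 hx hy₁ hy₂ f hper hdiff ρ hρ h1 h2
  set q : ℝ := ‖p‖ with hq
  set s : ℝ := Real.sqrt q with hs
  have hq0 : 0 < q := hp0
  have hs0 : 0 < s := Real.sqrt_pos.2 hq0
  have hss : s * s = q := Real.mul_self_sqrt hq0.le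
  have hs1 : s < 1 := by
    nlinarith [hss, hp1, hs0]
  have hx0 : 0 < ‖x‖ := norm_pos_iff.2 hx
  set R : ℝ := ‖x‖ / s with hR
  have hR0 : 0 < R := div_pos hx0 hs0
  have hss' : s * s < s := by nlinarith
  have hxR : ‖x‖ < R := by
    rw [hR, lt_div_iff₀ hs0]
    nlinarith
  have hRx : R = s⁻¹ * ‖x‖ := by rw [hR, div_eq_mul_inv, mul_comm]
  have hqR : q * R = s * ‖x‖ := by
    rw [hRx, ← hss]
    field_simp
  have hinx : q * R < ‖x‖ := by rw [hqR]; nlinarith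
  have hqR0 : 0 < q * R := by positivity
  have hqRR : q * R ≤ R := by nlinarith
  -- orbit facts
  have hnorm_orb : ∀ n : ℤ, ‖p ^ n * x‖ = q ^ n * ‖x‖ := by
    intro n; rw [norm_mul, norm_zpow]
  have K1 : ∀ n : ℤ, q * R ≤ ‖p ^ n * x‖ → ‖p ^ n * x‖ ≤ R → p ^ n * x = x := by
    intro n hlo hhi
    rw [hnorm_orb] at hlo hhi
    rw [hqR] at hlo
    rw [hRx] at hhi
    have e2 : s ≤ q ^ n := le_of_mul_le_mul_right hlo hx0
    have e3 : (q : ℝ) ^ n ≤ s⁻¹ := le_of_mul_le_mul_right hhi hx0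
    have hn0 : n = 0 := by
      by_contra hne
      rcases lt_or_gt_of_ne hne with hlt | hgt
      · have e1 : (q : ℝ) ^ (-1 : ℤ) ≤ q ^ n :=
          (zpow_le_zpow_iff_right_of_lt_one₀ hq0 hp1).2 (by omega)
        rw [zpow_neg_one] at e1
        have e5 : q⁻¹ ≤ s⁻¹ := e1.trans e3
        have e6 : s ≤ q := (inv_le_inv₀ hq0 hs0).1 e5
        nlinarith
      · have e1 : (q : ℝ) ^ n ≤ q ^ (1 : ℤ) :=
          (zpow_le_zpow_iff_right_of_lt_one₀ hq0 hp1).2 (by omega)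
        rw [zpow_one] at e1
        nlinarith
    rw [hn0]; simp
  have K2out : ∀ n : ℤ, ‖p ^ n * x‖ ≠ R := by
    intro n hcon
    rw [hnorm_orb, hRx] at hcon
    have hqn : (q : ℝ) ^ n = s⁻¹ := mul_right_cancel₀ hx0.ne' hcon
    have h2n : (q : ℝ) ^ (2 * n) = q ^ (-1 : ℤ) := by
      rw [two_mul, zpow_add₀ hq0.ne', hqn, zpow_neg_one, ← hss, mul_inv]
    have := (zpow_right_strictAnti₀ hq0 hp1).injective h2n
    omega
  have K2in : ∀ n : ℤ, ‖p ^ n * x‖ ≠ q * R := by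
    intro n hcon
    rw [hnorm_orb, hqR] at hcon
    have hqn : (q : ℝ) ^ n = s := mul_right_cancel₀ hx0.ne' hcon
    have h2n : (q : ℝ) ^ (2 * n) = q ^ (1 : ℤ) := by
      rw [two_mul, zpow_add₀ hq0.ne', hqn, zpow_one, hss]
    have := (zpow_right_strictAnti₀ hq0 hp1).injective h2n
    omega
  -- analytic part
  set g : ℂ → ℂ := fun z => z⁻¹ * G z with hgdef
  have hgdiff : ∀ z : ℂ, z ≠ 0 → (∀ n : ℤ, z ≠ p ^ n * x) → DifferentiableAt ℂ g z := by
    intro z hz ho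
    exact (differentiableAt_id.inv hz).mul (hGdiff z hz (Or.inr ho))
  set h : ℂ → ℂ := fun z => g z - ρ / x * (z - x)⁻¹ with hhdef
  have hres_h : Tendsto (fun z => (z - x) * h z) (𝓝[≠] x) (𝓝 0) := by
    have tinv : Tendsto (fun z : ℂ => z⁻¹) (𝓝[≠] x) (𝓝 x⁻¹) :=
      (continuousAt_inv₀ hx).continuousWithinAt
    have t1 : Tendsto (fun z : ℂ => z⁻¹ * ((z - x) * G z) - ρ / x) (𝓝[≠] x)
        (𝓝 (x⁻¹ * ρ - ρ / x)) := (tinv.mul hGres).sub tendsto_const_nhds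
    have hval : x⁻¹ * ρ - ρ / x = 0 := by field_simp; ring
    rw [hval] at t1
    refine t1.congr' ?_
    filter_upwards [self_mem_nhdsWithin] with z hz
    have hzx : z - x ≠ 0 := sub_ne_zero.2 hz
    simp only [hhdef, hgdef]
    rw [mul_sub, show (z - x) * (ρ / x * (z - x)⁻¹) = ρ / x * ((z - x) * (z - x)⁻¹) by ring,
      mul_inv_cancel₀ hzx, mul_one]
    ring
  have ho : (fun z => h z - h x) =o[𝓝[≠] x] fun z => (z - x)⁻¹ := by
    rw [Asymptotics.isLittleO_iff_tendsto']
    · have hsub : Tendsto (fun z : ℂ => z - x) (𝓝[≠] x) (𝓝 0) := by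
        have h' : Tendsto (fun z : ℂ => z - x) (𝓝 x) (𝓝 (x - x)) :=
          (continuous_id.sub continuous_const).tendsto x
        rw [sub_self] at h'
        exact h'.mono_left nhdsWithin_le_nhds
      have hT2 : Tendsto (fun z => (z - x) * h z - (z - x) * h x) (𝓝[≠] x) (𝓝 0) := by
        have := hres_h.sub (hsub.mul_const (h x))
        simpa using this
      refine hT2.congr' ?_
      filter_upwards [self_mem_nhdsWithin] with z hz
      have hzx : (z : ℂ) - x ≠ 0 := sub_ne_zero.2 hz
      field_simp
    · filter_upwards [self_mem_nhdsWithin] with z hz h0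
      exact absurd (inv_eq_zero.1 h0) (sub_ne_zero.2 hz)
  -- neighborhood of x for the update
  have hev := eventually_good p x y₁ y₂ hp0 hp1 hx hy₁ hy₂ hx
  rw [eventually_nhdsWithin_iff] at hev
  obtain ⟨U, hUsub, hUopen, hUx⟩ := _root_.eventually_nhds_iff.1 hev
  set H : ℂ → ℂ := Function.update h x (limUnder (𝓝[≠] x) h) with hHdef
  have hHU : DifferentiableOn ℂ H U := by
    refine Complex.differentiableOn_update_limUnder_of_isLittleO (hUopen.mem_nhds hUx) ?_ ho
    rintro z ⟨hzU, hzx⟩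
    rw [mem_singleton_iff] at hzx
    have hzP := hUsub z hzU hzx
    exact ((hgdiff z hzP.1 fun n => (hzP.2 n).1).sub
      ((differentiableAt_const _).mul
        ((differentiableAt_id.sub_const x).inv (sub_ne_zero.2 hzx)))).differentiableWithinAt
  have hHx : DifferentiableAt ℂ H x := hHU.differentiableAt (hUopen.mem_nhds hUx)
  have hHann : ∀ z : ℂ, q * R ≤ ‖z‖ → ‖z‖ ≤ R → DifferentiableAt ℂ H z := by
    intro z hz1 hz2
    rcases eq_or_ne z x with rfl | hzx
    · exact hHx
    · have hz0 : z ≠ 0 := by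
        intro h0
        rw [h0] at hz1
        simp at hz1
        linarith
      have horb : ∀ n : ℤ, z ≠ p ^ n * x := by
        intro n hcon
        exact hzx (by rw [hcon]; exact K1 n (hcon ▸ hz1) (hcon ▸ hz2))
      have hdh : DifferentiableAt ℂ h z := (hgdiff z hz0 horb).sub
        ((differentiableAt_const _).mul
          ((differentiableAt_id.sub_const x).inv (sub_ne_zero.2 hzx)))
      refine hdh.congr_of_eventuallyEq ?_
      filter_upwards [eventually_ne_nhds hzx] with w hw
      simp [hHdef, Function.update_of_ne hw]
  have eqH : (∮ z in C(0, R), H z) = ∮ z in C(0, q * R), H z := by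
    refine Complex.circleIntegral_eq_of_differentiable_on_annulus_off_countable hqR0 hqRR
      countable_empty ?_ ?_
    · rintro z ⟨hz1, hz2⟩
      rw [mem_closedBall, dist_zero_right] at hz1
      rw [mem_ball, dist_zero_right] at hz2
      push_neg at hz2
      exact (hHann z hz2 hz1).continuousAt.continuousWithinAt
    · rintro z ⟨⟨hz1, hz2⟩, -⟩
      rw [mem_ball, dist_zero_right] at hz1
      rw [mem_closedBall, dist_zero_right] at hz2
      push_neg at hz2
      exact hHann z hz2.le hz1.le
  have eqHh : ∀ T : ℝ, 0 ≤ T → ‖x‖ ≠ T → (∮ z in C(0, T), H z) = ∮ z in C(0, T), h z := by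
    intro T hT hne
    refine circleIntegral.integral_congr hT ?_
    intro z hzs
    rw [mem_sphere, dist_zero_right] at hzs
    have hzx : z ≠ x := by
      intro e
      rw [e] at hzs
      exact hne hzs
    simp [hHdef, Function.update_of_ne hzx]
  have hsph : ∀ T : ℝ, 0 < T → (∀ n : ℤ, ‖p ^ n * x‖ ≠ T) → CircleIntegrable g 0 T := by
    intro T hT hforb
    refine ContinuousOn.circleIntegrable hT.le ?_
    intro z hzs
    rw [mem_sphere, dist_zero_right] at hzs
    have hz0 : z ≠ 0 := by
      intro h0
      rw [h0] at hzs
      simp at hzs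
      linarith
    have horb : ∀ n : ℤ, z ≠ p ^ n * x := by
      intro n e
      exact hforb n (by rw [← e]; exact hzs)
    exact (hgdiff z hz0 horb).continuousAt.continuousWithinAt
  have hint_gR : CircleIntegrable g 0 R := hsph R hR0 K2out
  have hint_gqR : CircleIntegrable g 0 (q * R) := hsph (q * R) hqR0 K2in
  have hint_inv : ∀ T : ℝ, 0 ≤ T → ‖x‖ ≠ T → CircleIntegrable (fun z => ρ / x * (z - x)⁻¹) 0 T := by
    intro T hT hne
    have base : CircleIntegrable (fun z => (z - x)⁻¹) 0 T := by
      rw [circleIntegrable_sub_inv_iff]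
      refine Or.inr ?_
      intro hmem
      rw [mem_sphere, dist_zero_right] at hmem
      rw [_root_.abs_of_nonneg hT] at hmem
      exact hne hmem
    exact base.const_mul (ρ / x)
  have split : ∀ T : ℝ, CircleIntegrable g 0 T →
      CircleIntegrable (fun z => ρ / x * (z - x)⁻¹) 0 T →
      (∮ z in C(0, T), h z)
        = (∮ z in C(0, T), g z) - ρ / x * ∮ z in C(0, T), (z - x)⁻¹ := by
    intro T hgint hiint
    calc (∮ z in C(0, T), h z) = ∮ z in C(0, T), (g z - ρ / x * (z - x)⁻¹) := rfl
    _ = (∮ z in C(0, T), g z) - ∮ z in C(0, T), ρ / x * (z - x)⁻¹ :=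
        circleIntegral.integral_sub hgint hiint
    _ = (∮ z in C(0, T), g z) - ρ / x * ∮ z in C(0, T), (z - x)⁻¹ := by
        rw [circleIntegral.integral_const_mul]
  have inv_out : (∮ z in C(0, R), (z - x)⁻¹) = 2 * Real.pi * Complex.I := by
    refine circleIntegral.integral_sub_inv_of_mem_ball ?_
    rw [mem_ball, dist_zero_right]
    exact hxR
  have inv_in : (∮ z in C(0, q * R), (z - x)⁻¹) = 0 := by
    refine Complex.circleIntegral_eq_zero_of_differentiable_on_off_countable hqR0.le
      countable_empty ?_ ?_
    · intro z hz
      rw [mem_closedBall, dist_zero_right] at hz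
      have hzx : z ≠ x := by
        intro e
        rw [e] at hz
        linarith
      exact (((differentiableAt_id (𝕜 := ℂ) (x := z)).sub_const x).inv
        (sub_ne_zero.2 hzx)).continuousAt.continuousWithinAt
    · rintro z ⟨hz, -⟩
      rw [mem_ball, dist_zero_right] at hz
      have hzx : z ≠ x := by
        intro e
        rw [e] at hz
        linarith
      exact (differentiableAt_id.sub_const x).inv (sub_ne_zero.2 hzx)
  have rot : (∮ z in C(0, q * R), g z) = ∮ z in C(0, R), g z := by
    refine circleIntegral_rot p hp hR0.le g ?_
    intro w hw
    have hw0 : w ≠ 0 := by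
      intro h0
      rw [h0] at hw
      simp at hw
      linarith
    have hworb : ∀ n : ℤ, w ≠ p ^ n * x := by
      intro n e
      exact K2out n (by rw [← e]; exact hw)
    have hGp : G (p * w) = G w := hGper w hw0 (Or.inr hworb)
    simp only [hgdef]
    rw [hGp, mul_inv]
    field_simp
  have hout := eqHh R hR0.le hxR.ne
  have hin := eqHh (q * R) hqR0.le hinx.ne'
  rw [hout, split R hint_gR (hint_inv R hR0.le hxR.ne), inv_out] at eqH
  rw [hin, split (q * R) hint_gqR (hint_inv (q * R) hqR0.le hinx.ne'), inv_in, rot] at eqH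
  have hval : ρ / x * (2 * Real.pi * Complex.I) = 0 := by
    have := eqH
    ring_nf at this ⊢
    linear_combination -this
  have hpi : (2 * (Real.pi : ℂ) * Complex.I) ≠ 0 := by
    refine mul_ne_zero (mul_ne_zero two_ne_zero ?_) Complex.I_ne_zero
    exact_mod_cast Real.pi_ne_zero
  have hdiv : ρ / x = 0 := by
    rcases mul_eq_zero.1 hval with h' | h'
    · exact h'
    · exact absurd h' hpi
  rcases div_eq_zero_iff.1 hdiv with h' | h'
  · exact h'
  · exact absurd h' hx

lemma elliptic_const (p x y₁ y₂ : ℂ) (hp0 : 0 < ‖p‖) (hp1 : ‖p‖ < 1)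
    (hx : x ≠ 0) (hy₁ : y₁ ≠ 0) (hy₂ : y₂ ≠ 0) (f : ℂ → ℂ)
    (hper : ∀ z : ℂ, z ≠ 0 → f (p * z) = f z)
    (hdiff : ∀ z : ℂ, z ≠ 0 → (∀ n : ℤ, z ≠ p ^ n * x ∧ z ≠ p ^ n * y₁ ∧ z ≠ p ^ n * y₂) →
      DifferentiableAt ℂ f z)
    (h0 : Tendsto (fun z => (z - x) * f z) (𝓝[≠] x) (𝓝 0))
    (h1 : Tendsto (fun z => (z - y₁) * f z) (𝓝[≠] y₁) (𝓝 0))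
    (h2 : Tendsto (fun z => (z - y₂) * f z) (𝓝[≠] y₂) (𝓝 0)) :
    ∃ m : ℂ, ∀ z : ℂ, z ≠ 0 →
      (∀ n : ℤ, z ≠ p ^ n * x ∧ z ≠ p ^ n * y₁ ∧ z ≠ p ^ n * y₂) → f z = m := by
  classical
  have hp : p ≠ 0 := by intro h; rw [h] at hp0; simp at hp0
  obtain ⟨G, hGf, hGdiff, hGper, -⟩ :=
    regularize p x y₁ y₂ hp0 hp1 hx hy₁ hy₂ f hper hdiff 0 h0 h1 h2
  have hGdiff' : ∀ z : ℂ, z ≠ 0 → DifferentiableAt ℂ G z := fun z hz => hGdiff z hz (Or.inl rfl)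
  have hGper' : ∀ z : ℂ, z ≠ 0 → G (p * z) = G z := fun z hz => hGper z hz (Or.inl rfl)
  have hGzpow : ∀ (n : ℤ) (z : ℂ), z ≠ 0 → G (p ^ n * z) = G z := per_zpow hp hGper'
  set A : Set ℂ := closedBall 0 1 \ ball 0 ‖p‖ with hA
  have hAcomp : IsCompact A := (isCompact_closedBall 0 1).diff isOpen_ball
  have hAcont : ContinuousOn G A := by
    intro z hz
    have hz0 : z ≠ 0 := by
      intro h0'
      exact hz.2 (by rw [h0']; exact mem_ball_self hp0)
    exact (hGdiff' z hz0).continuousAt.continuousWithinAt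
  obtain ⟨K, hK⟩ := hAcomp.exists_bound_of_continuousOn hAcont
  have hbdd : ∀ z : ℂ, z ≠ 0 → ‖G z‖ ≤ K := by
    intro z hz
    have hz0 : (0 : ℝ) < ‖z‖ := norm_pos_iff.2 hz
    obtain ⟨m, hm1, hm2⟩ := exists_mem_Ioc_zpow (x := ‖z‖) (y := ‖p‖⁻¹) hz0
      ((one_lt_inv₀ hp0).2 hp1)
    have hpow_pos : (0 : ℝ) < ‖p‖ ^ (m + 1) := zpow_pos hp0 _
    have key : p ^ (m + 1) * z ∈ A := by
      constructor
      · rw [mem_closedBall, dist_zero_right, norm_mul, norm_zpow]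
        have h2' : ‖z‖ ≤ (‖p‖ ^ (m + 1))⁻¹ := by rw [← inv_zpow]; exact hm2
        calc ‖p‖ ^ (m + 1) * ‖z‖ ≤ ‖p‖ ^ (m + 1) * (‖p‖ ^ (m + 1))⁻¹ := by
              exact mul_le_mul_of_nonneg_left h2' hpow_pos.le
        _ = 1 := mul_inv_cancel₀ hpow_pos.ne'
      · rw [mem_ball, dist_zero_right, norm_mul, norm_zpow]
        push_neg
        have h1' : (‖p‖ : ℝ) ^ (-m) < ‖z‖ := by
          rw [zpow_neg, ← inv_zpow]
          exact hm1
        have : ‖p‖ < ‖p‖ ^ (m + 1) * ‖z‖ := by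
          calc ‖p‖ = ‖p‖ ^ (m + 1) * ‖p‖ ^ (-m) := by
                rw [← zpow_add₀ hp0.ne']
                norm_num
          _ < ‖p‖ ^ (m + 1) * ‖z‖ := by exact mul_lt_mul_of_pos_left h1' hpow_pos
        exact this.le
    have hb := hK _ key
    rwa [hGzpow (m + 1) z hz] at hb
  set B : ℂ → ℂ := Function.update G 0 (limUnder (𝓝[≠] (0 : ℂ)) G) with hB
  have hBdiff : Differentiable ℂ B := by
    rw [← differentiableOn_univ]
    refine Complex.differentiableOn_update_limUnder_of_isLittleO (s := univ) univ_mem ?_ ?_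
    · rintro z ⟨-, hz⟩
      rw [mem_singleton_iff] at hz
      exact (hGdiff' z hz).differentiableWithinAt
    · refine Filter.IsBoundedUnder.isLittleO_sub_self_inv ?_
      refine ⟨K + ‖G 0‖, ?_⟩
      rw [eventually_map]
      filter_upwards [self_mem_nhdsWithin] with z hz
      exact (norm_sub_le _ _).trans ((add_le_add_iff_right _).2 (hbdd z hz))
  have hBbound : Bornology.IsBounded (Set.range B) := by
    rw [isBounded_iff_forall_norm_le]
    refine ⟨max K ‖B 0‖, ?_⟩
    rintro v ⟨z, rfl⟩
    rcases eq_or_ne z 0 with rfl | hz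
    · exact le_max_right _ _
    · rw [show B z = G z from Function.update_of_ne hz _ _]
      exact (hbdd z hz).trans (le_max_left _ _)
  refine ⟨B 1, ?_⟩
  intro z hz hgood
  rw [← hGf z hz hgood, show G z = B z from (Function.update_of_ne hz _ _).symm]
  exact hBdiff.apply_eq_apply_of_bounded hBbound z 1

theorem elliptic_matrix_rigidity (p a b c : ℂ)
    (hp0 : 0 < ‖p‖) (hp1 : ‖p‖ < 1)
    (ha : a ≠ 0) (hb : b ≠ 0) (hc : c ≠ 0)
    (hab : ∀ n : ℤ, a ≠ p ^ n * b) (hac : ∀ n : ℤ, a ≠ p ^ n * c)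
    (hbc : ∀ n : ℤ, b ≠ p ^ n * c)
    (C : ℂ → Matrix (Fin 2) (Fin 2) ℂ)
    (hell : ∀ z : ℂ, z ≠ 0 → C (p * z) = C z)
    (hanal : ∀ z : ℂ, z ≠ 0 →
      (∀ n : ℤ, z ≠ p ^ n * a ∧ z ≠ p ^ n * b ∧ z ≠ p ^ n * c) →
      ∀ i j : Fin 2, AnalyticAt ℂ (fun w => C w i j) z)
    (Ra Rb Rc : Matrix (Fin 2) (Fin 2) ℂ)
    (hRa : Tendsto (fun z : ℂ => (z - a) • C z) (𝓝[≠] a) (𝓝 Ra))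
    (hRb : Tendsto (fun z : ℂ => (z - b) • C z) (𝓝[≠] b) (𝓝 Rb))
    (hRc : Tendsto (fun z : ℂ => (z - c) • C z) (𝓝[≠] c) (𝓝 Rc))
    (hRaform : ∃ t : ℂ, Ra = t • !![(1 : ℂ), -1; 1, -1])
    (hRbform : ∃ t : ℂ, Rb = t • !![(0 : ℂ), 0; 1, 0])
    (hRcform : ∃ t : ℂ, Rc = t • !![(0 : ℂ), 1; 0, 0]) :
    ∃ M : Matrix (Fin 2) (Fin 2) ℂ,
      (∀ z : ℂ, z ≠ 0 →
        (∀ n : ℤ, z ≠ p ^ n * a ∧ z ≠ p ^ n * b ∧ z ≠ p ^ n * c) → C z = M) ∧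
      (((∃ α : ℂ, M.mulVec ![1, 1] = α • ![1, 1]) ∧
        (∃ α : ℂ, M.mulVec ![0, 1] = α • ![0, 1]) ∧
        (∃ α : ℂ, M.mulVec ![1, 0] = α • ![1, 0])) →
        ∃ s : ℂ, M = s • (1 : Matrix (Fin 2) (Fin 2) ℂ)) := by
  have hp : p ≠ 0 := by intro h; rw [h] at hp0; simp at hp0
  have flip : ∀ {u v : ℂ}, (∀ n : ℤ, u ≠ p ^ n * v) → ∀ n : ℤ, v ≠ p ^ n * u := by
    intro u v h n e
    refine h (-n) ?_
    rw [e, ← mul_assoc, ← zpow_add₀ hp]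
    simp
  have hba := flip hab
  have hca := flip hac
  have hcb := flip hbc
  obtain ⟨t₁, rfl⟩ := hRaform
  obtain ⟨t₂, rfl⟩ := hRbform
  obtain ⟨t₃, rfl⟩ := hRcform
  -- entrywise limits
  have hEa : ∀ i j : Fin 2, Tendsto (fun z => (z - a) * C z i j) (𝓝[≠] a)
      (𝓝 ((t₁ • !![(1 : ℂ), -1; 1, -1]) i j)) := by
    intro i j
    have h' := (tendsto_pi_nhds.1 ((tendsto_pi_nhds.1 hRa) i)) j
    refine h'.congr ?_
    intro z
    simp [Matrix.smul_apply]
  have hEb : ∀ i j : Fin 2, Tendsto (fun z => (z - b) * C z i j) (𝓝[≠] b)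
      (𝓝 ((t₂ • !![(0 : ℂ), 0; 1, 0]) i j)) := by
    intro i j
    have h' := (tendsto_pi_nhds.1 ((tendsto_pi_nhds.1 hRb) i)) j
    refine h'.congr ?_
    intro z
    simp [Matrix.smul_apply]
  have hEc : ∀ i j : Fin 2, Tendsto (fun z => (z - c) * C z i j) (𝓝[≠] c)
      (𝓝 ((t₃ • !![(0 : ℂ), 1; 0, 0]) i j)) := by
    intro i j
    have h' := (tendsto_pi_nhds.1 ((tendsto_pi_nhds.1 hRc) i)) j
    refine h'.congr ?_
    intro z
    simp [Matrix.smul_apply]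
  have hper : ∀ i j : Fin 2, ∀ z : ℂ, z ≠ 0 → C (p * z) i j = C z i j := by
    intro i j z hz
    rw [hell z hz]
  have hdiffa : ∀ i j : Fin 2, ∀ z : ℂ, z ≠ 0 →
      (∀ n : ℤ, z ≠ p ^ n * a ∧ z ≠ p ^ n * b ∧ z ≠ p ^ n * c) →
      DifferentiableAt ℂ (fun w => C w i j) z := fun i j z hz hg =>
    (hanal z hz hg i j).differentiableAt
  have hdiffb : ∀ i j : Fin 2, ∀ z : ℂ, z ≠ 0 →
      (∀ n : ℤ, z ≠ p ^ n * b ∧ z ≠ p ^ n * a ∧ z ≠ p ^ n * c) →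
      DifferentiableAt ℂ (fun w => C w i j) z := fun i j z hz hg =>
    hdiffa i j z hz fun n => ⟨(hg n).2.1, (hg n).1, (hg n).2.2⟩
  have hdiffc : ∀ i j : Fin 2, ∀ z : ℂ, z ≠ 0 →
      (∀ n : ℤ, z ≠ p ^ n * c ∧ z ≠ p ^ n * a ∧ z ≠ p ^ n * b) →
      DifferentiableAt ℂ (fun w => C w i j) z := fun i j z hz hg =>
    hdiffa i j z hz fun n => ⟨(hg n).2.1, (hg n).2.2, (hg n).1⟩
  -- step 1 : t₁ = 0
  have ht₁ : t₁ = 0 := by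
    have := residue_vanish p a b c hp0 hp1 ha hb hc (fun w => C w 0 0)
      (hper 0 0) (hdiffa 0 0) t₁
      (by simpa [Matrix.smul_apply] using hEa 0 0)
      (by simpa [Matrix.smul_apply] using hEb 0 0)
      (by simpa [Matrix.smul_apply] using hEc 0 0)
    exact this
  subst ht₁
  -- step 2 : t₂ = 0
  have ht₂ : t₂ = 0 := by
    have := residue_vanish p b a c hp0 hp1 hb ha hc (fun w => C w 1 0)
      (hper 1 0) (hdiffb 1 0) t₂
      (by simpa [Matrix.smul_apply] using hEb 1 0)
      (by simpa [Matrix.smul_apply] using hEa 1 0)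
      (by simpa [Matrix.smul_apply] using hEc 1 0)
    exact this
  subst ht₂
  -- step 3 : t₃ = 0
  have ht₃ : t₃ = 0 := by
    have := residue_vanish p c a b hp0 hp1 hc ha hb (fun w => C w 0 1)
      (hper 0 1) (hdiffc 0 1) t₃
      (by simpa [Matrix.smul_apply] using hEc 0 1)
      (by simpa [Matrix.smul_apply] using hEa 0 1)
      (by simpa [Matrix.smul_apply] using hEb 0 1)
    exact this
  subst ht₃
  -- constancy of each entry
  have hconst : ∀ i j : Fin 2, ∃ m : ℂ, ∀ z : ℂ, z ≠ 0 →
      (∀ n : ℤ, z ≠ p ^ n * a ∧ z ≠ p ^ n * b ∧ z ≠ p ^ n * c) → C z i j = m := by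
    intro i j
    exact elliptic_const p a b c hp0 hp1 ha hb hc (fun w => C w i j)
      (hper i j) (hdiffa i j)
      (by simpa [Matrix.smul_apply] using hEa i j)
      (by simpa [Matrix.smul_apply] using hEb i j)
      (by simpa [Matrix.smul_apply] using hEc i j)
  obtain ⟨m00, hm00⟩ := hconst 0 0
  obtain ⟨m01, hm01⟩ := hconst 0 1
  obtain ⟨m10, hm10⟩ := hconst 1 0
  obtain ⟨m11, hm11⟩ := hconst 1 1
  refine ⟨!![m00, m01; m10, m11], ?_, ?_⟩
  · intro z hz hg
    apply Matrix.ext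
    intro i j
    fin_cases i <;> fin_cases j <;>
      simp [hm00 z hz hg, hm01 z hz hg, hm10 z hz hg, hm11 z hz hg]
  · rintro ⟨⟨α₁, hα₁⟩, ⟨α₂, hα₂⟩, ⟨α₃, hα₃⟩⟩
    have e01 : m01 = 0 := by
      have := congrFun hα₂ 0
      simp [Matrix.mulVec, dotProduct, Fin.sum_univ_two] at this
      exact this
    have e10 : m10 = 0 := by
      have := congrFun hα₃ 1
      simp [Matrix.mulVec, dotProduct, Fin.sum_univ_two] at this
      exact this
    have e0 : m00 + m01 = α₁ := by
      have := congrFun hα₁ 0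
      simpa [Matrix.mulVec, dotProduct, Fin.sum_univ_two] using this
    have e1 : m10 + m11 = α₁ := by
      have := congrFun hα₁ 1
      simpa [Matrix.mulVec, dotProduct, Fin.sum_univ_two] using this
    refine ⟨m00, ?_⟩
    apply Matrix.ext
    intro i j
    have hdiag : m11 = m00 := by
      rw [e01] at e0
      rw [e10] at e1
      simp at e0 e1
      rw [e1, e0]
    fin_cases i <;> fin_cases j <;>
      simp [Matrix.one_apply, e01, e10, hdiag]
end
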